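/- arXiv:2012.03311 — 6 statements merged into one kernel-verified Lean document; each statement's English description precedes it below -/
import Mathlib

section
/- For each regular infinite real matrix A, there exists a sequence x with values in {0,1} such that either Ax is not well defined or Ax is not statistically convergent. -/
open Filter Topology

/-- Characteristic function identifying a subset of ℕ with a point of Cantor space. -/
noncomputable def chi (S : Set ℕ) : ℕ → Bool := fun n => @decide (n ∈ S) (Classical.dec _)

/-- `I` is an ideal on ℕ: hereditary, closed under finite unions, contains all
finite sets, and does not contain ℕ. -/
structure IsIdeal (I : Set (Set ℕ)) : Prop where
  mem_of_subset : ∀ ⦃S T : Set ℕ⦄, S ⊆ T → T ∈ I → S ∈ I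
  union_mem : ∀ ⦃S T : Set ℕ⦄, S ∈ I → T ∈ I → S ∪ T ∈ I
  finite_mem : ∀ ⦃S : Set ℕ⦄, S.Finite → S ∈ I
  univ_not_mem : Set.univ ∉ I

/-- The dual filter of an ideal. -/
def dualFilter (I : Set (Set ℕ)) : Set (Set ℕ) := {S | Sᶜ ∈ I}

/-- A real sequence is bounded. -/
def Bdd (y : ℕ → ℝ) : Prop := ∃ M : ℝ, ∀ n, |y n| ≤ M

/-- The series ∑ₖ f k converges (its partial sums converge). -/
def SeriesConv (f : ℕ → ℝ) : Prop :=
  ∃ l : ℝ, Tendsto (fun N => ∑ k ∈ Finset.range N, f k) atTop (𝓝 l)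

/-- The value of the series ∑ₖ f k (the limit of partial sums, when it exists). -/
noncomputable def seriesSum (f : ℕ → ℝ) : ℝ :=
  limUnder atTop (fun N => ∑ k ∈ Finset.range N, f k)

/-- All rows of `A` applied to `y` give convergent series: `Ay` is well defined. -/
def RowsConv (A : ℕ → ℕ → ℝ) (y : ℕ → ℝ) : Prop := ∀ n, SeriesConv (fun k => A n k * y k)

/-- The sequence `Ay = (∑ₖ a_{n,k} y_k)ₙ`. -/
noncomputable def matMul (A : ℕ → ℕ → ℝ) (y : ℕ → ℝ) : ℕ → ℝ :=
  fun n => seriesSum (fun k => A n k * y k)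

/-- `y` is `I`-convergent to `η`. -/
def IConvTo (I : Set (Set ℕ)) (y : ℕ → ℝ) (η : ℝ) : Prop :=
  ∀ ε : ℝ, 0 < ε → {n | ε < |y n - η|} ∈ I

/-- `y` is `I`-convergent. -/
def IConv (I : Set (Set ℕ)) (y : ℕ → ℝ) : Prop := ∃ η : ℝ, IConvTo I y η

/-- `A` is a regular matrix: it maps convergent sequences to convergent sequences,
preserving limits. -/
def RegularMatrix (A : ℕ → ℕ → ℝ) : Prop :=
  ∀ (y : ℕ → ℝ) (l : ℝ), Tendsto y atTop (𝓝 l) →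
    RowsConv A y ∧ Tendsto (matMul A y) atTop (𝓝 l)

/-- `A` is `(Fin, I)`-regular: it maps bounded convergent sequences to bounded
`I`-convergent sequences, preserving the limit. -/
def FinIRegular (I : Set (Set ℕ)) (A : ℕ → ℕ → ℝ) : Prop :=
  ∀ y : ℕ → ℝ, Bdd y → ∀ l : ℝ, Tendsto y atTop (𝓝 l) →
    RowsConv A y ∧ Bdd (matMul A y) ∧ IConvTo I (matMul A y) l

/-- `S ⊆ ℕ` has asymptotic density zero. -/
noncomputable def DensityZero (S : Set ℕ) : Prop :=
  Tendsto (fun n : ℕ =>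
      (((Finset.range (n + 1)).filter (fun m => @decide (m ∈ S) (Classical.dec _) = true)).card : ℝ) / n)
    atTop (𝓝 0)

/-- `y` is statistically convergent. -/
noncomputable def StatConv (y : ℕ → ℝ) : Prop :=
  ∃ η : ℝ, ∀ ε : ℝ, 0 < ε → DensityZero {n | ε < |y n - η|}

/-- The ideal Fin × Fin, represented as an ideal on ℕ via the 2-adic valuation. -/
def FinTimesFin : Set (Set ℕ) :=
  {S | ∀ᶠ k in atTop, {n ∈ S | padicValNat 2 n = k}.Finite}

/-- `I` contains an isomorphic copy of `J`. -/
def ContainsIsoCopy (I J : Set (Set ℕ)) : Prop :=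
  ∃ ι : ℕ → ℕ, Function.Injective ι ∧ ∀ S : Set ℕ, S ∈ J ↔ ι ⁻¹' S ∈ I

/-- A family of subsets of ℕ is Borel (as a subset of the Cantor space `ℕ → Bool`). -/
def BorelFamily (𝒜 : Set (Set ℕ)) : Prop := @MeasurableSet (ℕ → Bool) (borel (ℕ → Bool)) (chi '' 𝒜)

/-- A family of subsets of ℕ is meager (as a subset of the Cantor space `ℕ → Bool`). -/
def MeagerFamily (𝒜 : Set (Set ℕ)) : Prop := IsMeagre (chi '' 𝒜)

/-- An F_σ subset of the Cantor space. -/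
def IsFSigma (K : Set (ℕ → Bool)) : Prop :=
  ∃ F : ℕ → Set (ℕ → Bool), (∀ n, IsClosed (F n)) ∧ K = ⋃ n, F n

/-- A family of subsets of ℕ is F_{σδ} (as a subset of the Cantor space). -/
def FSigmaDeltaFamily (𝒜 : Set (Set ℕ)) : Prop :=
  ∃ F : ℕ → ℕ → Set (ℕ → Bool), (∀ i j, IsClosed (F i j)) ∧ chi '' 𝒜 = ⋂ i, ⋃ j, F i j

/-- The space Σ of strictly increasing functions ℕ → ℕ, as a subspace of ℕ^ℕ. -/
abbrev MonoSeq : Type := {σ : ℕ → ℕ // StrictMono σ}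

/-- The set Σ_{x,A}(I) of those σ ∈ Σ for which A σ(x) is well defined and I-convergent. -/
noncomputable def SigmaSet (x : ℕ → ℝ) (A : ℕ → ℕ → ℝ) (I : Set (Set ℕ)) : Set MonoSeq :=
  {σ | RowsConv A (fun k => x (σ.1 k)) ∧ IConv I (matMul A (fun k => x (σ.1 k)))}

/-- `I*` is ω-diagonalizable by `I*`-universal sets. -/
def OmegaDiagonalizable (I : Set (Set ℕ)) : Prop :=
  ∃ F : ℕ → ℕ → Set ℕ,
    (∀ n k, (F n k).Finite ∧ (F n k).Nonempty) ∧
    (∀ n, ∀ A ∈ dualFilter I, ∃ k, F n k ⊆ A) ∧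
    (∀ A ∈ dualFilter I, ∃ n m, ∀ k, m < k → (F n k ∩ A).Nonempty)

/-- `y` is `I`-bounded. -/
def IBounded (I : Set (Set ℕ)) (y : ℕ → ℝ) : Prop := ∃ m : ℕ, {n | (m : ℝ) ≤ |y n|} ∈ I

/-- The metric d(σ₁,σ₂) = ∑_{i ∈ Im σ₁ Δ Im σ₂} 2^{-i} on Σ. -/
noncomputable def dSigma (σ₁ σ₂ : MonoSeq) : ℝ :=
  ∑' i : ℕ, Set.indicator (symmDiff (Set.range σ₁.1) (Set.range σ₂.1)) (fun i => (2 : ℝ)⁻¹ ^ i) i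


/- ### Auxiliary lemmas for `stmt_2` -/

noncomputable def bv (v : Bool) : ℝ := if v then 1 else 0

lemma bv_mem (v : Bool) : bv v = 0 ∨ bv v = 1 := by cases v <;> simp [bv]

lemma abs_bv_le (v : Bool) : |bv v| ≤ 1 := by cases v <;> simp [bv]

lemma seriesConv_sub {f g : ℕ → ℝ} (hf : SeriesConv f) (hg : SeriesConv g) :
    SeriesConv (fun k => f k - g k) := by
  obtain ⟨a, ha⟩ := hf; obtain ⟨b, hb⟩ := hg
  exact ⟨a - b, by simpa [Finset.sum_sub_distrib] using ha.sub hb⟩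

lemma summable_of_seriesConv_nonneg {f : ℕ → ℝ} (hf : ∀ n, 0 ≤ f n) (h : SeriesConv f) :
    Summable f := by
  obtain ⟨l, hl⟩ := h
  have hmono : Monotone (fun N => ∑ k ∈ Finset.range N, f k) := by
    intro a b hab
    exact Finset.sum_le_sum_of_subset_of_nonneg (Finset.range_subset_range.2 hab)
      (fun i _ _ => hf i)
  exact summable_of_sum_range_le hf (fun n => hmono.ge_of_tendsto hl n)

lemma matMul_eq_tsum {A : ℕ → ℕ → ℝ} {z : ℕ → ℝ} {n : ℕ}
    (h : Summable (fun k => A n k * z k)) :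
    matMul A z n = ∑' k, A n k * z k :=
  (h.hasSum.tendsto_sum_nat).limUnder_eq

/-- For every regular matrix `A` there is a {0,1}-valued sequence `x`
such that `Ax` is not well defined or not statistically convergent. -/
theorem stmt_2 (A : ℕ → ℕ → ℝ) (hA : RegularMatrix A) :
    ∃ x : ℕ → ℝ, (∀ n, x n = 0 ∨ x n = 1) ∧
      ¬ (RowsConv A x ∧ StatConv (matMul A x)) := by
  classical
  by_contra hcon
  push_neg at hcon
  -- Step 1: all rows are absolutely summable
  have hrow : ∀ n, Summable (fun k => |A n k|) := by
    intro n
    have h1 := (hcon (fun k => if 0 < A n k then 1 else 0)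
      (fun k => by by_cases h : 0 < A n k <;> simp [h])).1 n
    have h2 := (hcon (fun k => if A n k < 0 then 1 else 0)
      (fun k => by by_cases h : A n k < 0 <;> simp [h])).1 n
    have h3 := seriesConv_sub h1 h2
    apply summable_of_seriesConv_nonneg (fun k => abs_nonneg _)
    have heq : (fun k => |A n k|) = fun k =>
        A n k * (if 0 < A n k then 1 else 0) - A n k * (if A n k < 0 then 1 else 0) := by
      funext k
      rcases lt_trichotomy (A n k) 0 with h | h | h
      · simp [abs_of_neg h, h, asymm h]
      · simp [h]
      · simp [abs_of_pos h, h, asymm h, not_lt.2 h.le]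
    rw [heq]; exact h3
  -- basic setup
  set X : (ℕ → Bool) → ℕ → ℝ := fun x k => bv (x k) with hX
  have hXmem : ∀ x n, X x n = 0 ∨ X x n = 1 := fun x n => bv_mem _
  have hsum : ∀ (x : ℕ → Bool) (m : ℕ), Summable (fun k => A m k * X x k) := by
    intro x m
    apply Summable.of_norm_bounded (hrow m)
    intro k
    rw [Real.norm_eq_abs, abs_mul]
    exact mul_le_of_le_one_right (abs_nonneg _) (abs_bv_le _)
  set g : ℕ → (ℕ → Bool) → ℝ := fun m x => ∑' k, A m k * X x k with hg
  have hmat : ∀ x m, matMul A (X x) m = g m x := fun x m => matMul_eq_tsum (hsum x m)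
  have hcont : ∀ m, Continuous (g m) := by
    intro m
    apply continuous_tsum (fun k => ?_) (hrow m) (fun k x => ?_)
    · exact continuous_const.mul
        ((continuous_of_discreteTopology (f := bv)).comp (continuous_apply k))
    · rw [Real.norm_eq_abs, abs_mul]
      exact mul_le_of_le_one_right (abs_nonneg _) (abs_bv_le _)
  -- the closed pieces
  set cnt : ℚ → (ℕ → Bool) → ℕ → ℕ := fun q x n =>
    ((Finset.range (n+1)).filter (fun m => (4:ℝ)⁻¹ < |g m x - (q:ℝ)|)).card with hcnt
  set F : ℚ × ℕ → Set (ℕ → Bool) := fun p =>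
    {x | ∀ n, p.2 ≤ n → (cnt p.1 x n : ℝ) ≤ n / 10} with hF
  have hFclosed : ∀ p, IsClosed (F p) := by
    intro p
    have hFeq : F p = ⋂ n, ⋂ (_ : p.2 ≤ n), {x | (cnt p.1 x n : ℝ) ≤ n / 10} := by
      ext x; simp [hF, Set.mem_iInter]
    rw [hFeq]
    refine isClosed_iInter fun n => isClosed_iInter fun _ => ?_
    rw [← isOpen_compl_iff]
    have hcompl : {x : ℕ → Bool | (cnt p.1 x n : ℝ) ≤ n / 10}ᶜ =
        ⋃ T ∈ (Finset.range (n+1)).powerset, ⋃ (_ : ((n:ℝ)/10) < T.card),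
          {x | ∀ m ∈ T, (4:ℝ)⁻¹ < |g m x - (p.1:ℝ)|} := by
      ext x
      simp only [Set.mem_compl_iff, Set.mem_setOf_eq, not_le, Set.mem_iUnion,
        Finset.mem_powerset]
      constructor
      · intro h
        exact ⟨(Finset.range (n+1)).filter (fun m => (4:ℝ)⁻¹ < |g m x - (p.1:ℝ)|),
          Finset.filter_subset _ _, h, fun m hm => (Finset.mem_filter.1 hm).2⟩
      · rintro ⟨T, hTsub, hTcard, hT⟩
        refine lt_of_lt_of_le hTcard ?_
        exact_mod_cast Finset.card_le_card (fun m hm =>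
          Finset.mem_filter.2 ⟨hTsub hm, hT m hm⟩)
    rw [hcompl]
    refine isOpen_biUnion fun T _ => isOpen_iUnion fun _ => ?_
    have heq : {x : ℕ → Bool | ∀ m ∈ T, (4:ℝ)⁻¹ < |g m x - (p.1:ℝ)|} =
        ⋂ m ∈ T, {x | (4:ℝ)⁻¹ < |g m x - (p.1:ℝ)|} := by
      ext x; simp
    rw [heq]
    exact isOpen_biInter_finset fun m _ =>
      isOpen_lt continuous_const (((hcont m).sub continuous_const).abs)
  -- the pieces cover the Cantor space
  have hcover : ⋃ p, F p = Set.univ := by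
    rw [Set.eq_univ_iff_forall]
    intro x
    obtain ⟨η, hη⟩ := (hcon (X x) (hXmem x)).2
    obtain ⟨q, hq⟩ := exists_rat_near η (by norm_num : (0:ℝ) < 8⁻¹)
    have hdz : DensityZero {n | (8:ℝ)⁻¹ < |matMul A (X x) n - η|} := hη 8⁻¹ (by norm_num)
    unfold DensityZero at hdz
    have hle : ∀ n : ℕ, (cnt q x n : ℝ) ≤
        ((((Finset.range (n+1)).filter (fun m =>
          @decide (m ∈ {n | (8:ℝ)⁻¹ < |matMul A (X x) n - η|}) (Classical.dec _) = true)).card : ℕ) : ℝ) := by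
      intro n
      have himp : ∀ m, ((4:ℝ)⁻¹ < |g m x - (q:ℝ)|) →
          (@decide (m ∈ {n | (8:ℝ)⁻¹ < |matMul A (X x) n - η|}) (Classical.dec _) = true) := by
        intro m hm
        apply decide_eq_true
        show (8:ℝ)⁻¹ < |matMul A (X x) m - η|
        rw [hmat]
        have h3 : |g m x - (q:ℝ)| ≤ |g m x - η| + |η - (q:ℝ)| := abs_sub_le _ _ _
        have h4 : |η - (q:ℝ)| < 8⁻¹ := hq
        linarith
      have hsubset : (Finset.range (n+1)).filter (fun m => (4:ℝ)⁻¹ < |g m x - (q:ℝ)|) ⊆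
          (Finset.range (n+1)).filter (fun m =>
            @decide (m ∈ {n | (8:ℝ)⁻¹ < |matMul A (X x) n - η|}) (Classical.dec _) = true) := by
        intro m hm
        rcases Finset.mem_filter.1 hm with ⟨h1, h2⟩
        exact Finset.mem_filter.2 ⟨h1, himp m h2⟩
      exact_mod_cast Finset.card_le_card hsubset
    have htend : Tendsto (fun n : ℕ => (cnt q x n : ℝ) / n) atTop (𝓝 0) := by
      apply squeeze_zero' (Eventually.of_forall fun n => by positivity)
        (Eventually.of_forall fun n => ?_) hdz
      gcongr
      exact_mod_cast hle n
    obtain ⟨N, hN⟩ := eventually_atTop.1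
      (htend.eventually_lt_const (by norm_num : (0:ℝ) < 10⁻¹))
    refine Set.mem_iUnion.2 ⟨(q, max N 1), ?_⟩
    simp only [hF, Set.mem_setOf_eq]
    intro n hn
    have hn1 : 1 ≤ n := le_trans (le_max_right _ _) hn
    have hnN : N ≤ n := le_trans (le_max_left _ _) hn
    have hnpos : (0:ℝ) < n := by exact_mod_cast hn1
    have := hN n hnN
    rw [div_lt_iff₀ hnpos] at this
    nlinarith
  -- Baire category
  obtain ⟨⟨q, N⟩, x₀, hx₀⟩ := nonempty_interior_of_iUnion_of_closed hFclosed hcover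
  obtain ⟨I, u, hIu, hpi⟩ := (isOpen_pi_iff.1 isOpen_interior) x₀ hx₀
  set v : Bool := decide ((q:ℝ) ≤ 2⁻¹) with hv
  set y : ℕ → Bool := fun k => if k ∈ I then x₀ k else v with hy
  have hyF : y ∈ F (q, N) := by
    apply interior_subset
    apply hpi
    intro i hi
    have hi' : i ∈ I := hi
    have : y i = x₀ i := by simp [hy, hi']
    rw [this]
    exact (hIu i hi').2
  have hvq : (2:ℝ)⁻¹ ≤ |(q:ℝ) - bv v| := by
    by_cases h : (q:ℝ) ≤ 2⁻¹
    · have hv1 : bv v = 1 := by simp [hv, bv, h]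
      rw [hv1, abs_of_nonpos (by linarith)]
      linarith
    · have hv0 : bv v = 0 := by simp [hv, bv, h]
      push_neg at h
      rw [hv0, sub_zero, abs_of_pos (by linarith)]
      linarith
  have hXy : Tendsto (X y) atTop (𝓝 (bv v)) := by
    apply Tendsto.congr' _ (tendsto_const_nhds (x := bv v))
    filter_upwards [eventually_gt_atTop (I.sup id)] with k hk
    have hknot : k ∉ I := fun hmem => absurd (Finset.le_sup (f := id) hmem) (not_le.2 hk)
    simp [hX, hy, hknot]
  have hAy : Tendsto (matMul A (X y)) atTop (𝓝 (bv v)) := (hA (X y) (bv v) hXy).2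
  have hAy' : Tendsto (fun m => g m y) atTop (𝓝 (bv v)) :=
    hAy.congr (fun m => hmat y m)
  obtain ⟨M, hM⟩ := Metric.tendsto_atTop.1 hAy' 8⁻¹ (by norm_num)
  have hbig : ∀ m, M ≤ m → (4:ℝ)⁻¹ < |g m y - (q:ℝ)| := by
    intro m hm
    have h1 : |g m y - bv v| < 8⁻¹ := by
      have := hM m hm; rwa [Real.dist_eq] at this
    have h3 : |(q:ℝ) - bv v| ≤ |(q:ℝ) - g m y| + |g m y - bv v| := abs_sub_le _ _ _
    rw [abs_sub_comm]
    linarith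
  set n := N + 2 * M + 10 with hn
  have hsub : (Finset.range (n+1)) \ (Finset.range M) ⊆
      (Finset.range (n+1)).filter (fun m => (4:ℝ)⁻¹ < |g m y - (q:ℝ)|) := by
    intro m hm
    rcases Finset.mem_sdiff.1 hm with ⟨h1, h2⟩
    exact Finset.mem_filter.2 ⟨h1, hbig m (le_of_not_gt (fun hlt => h2 (Finset.mem_range.2 hlt)))⟩
  have hcard := Finset.card_le_card hsub
  rw [Finset.card_sdiff_of_subset (Finset.range_subset_range.2 (by omega)), Finset.card_range,
    Finset.card_range] at hcard
  have hcard' : ((n + 1 - M : ℕ) : ℝ) ≤ (cnt q y n : ℝ) := by exact_mod_cast hcard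
  rw [Nat.cast_sub (by omega : M ≤ n + 1)] at hcard'
  push_cast at hcard'
  have hle10 : (cnt q y n : ℝ) ≤ n / 10 := hyF n (by omega)
  have hMn : (2 * M : ℝ) ≤ n := by exact_mod_cast (by omega : 2 * M ≤ n)
  have hncast : (n:ℝ) = (N:ℝ) + 2*(M:ℝ) + 10 := by rw [hn]; push_cast; ring
  have hN0 : (0:ℝ) ≤ N := Nat.cast_nonneg N
  have hM0 : (0:ℝ) ≤ M := Nat.cast_nonneg M
  linarith
end

section
/- Let x be a divergent real sequence and A be a regular infinite real matrix. Then the set Σ_{x,A} = {σ ∈ Σ : Aσ(x) is well defined and convergent} is meager in Σ. -/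
open Filter Topology

lemma seriesSum_eq {f : ℕ → ℝ} {l : ℝ}
    (h : Tendsto (fun N => ∑ k ∈ Finset.range N, f k) atTop (𝓝 l)) : seriesSum f = l :=
  h.limUnder_eq

lemma seriesConv_tendsto_zero {f : ℕ → ℝ} (h : SeriesConv f) : Tendsto f atTop (𝓝 0) := by
  obtain ⟨l, hl⟩ := h
  have h2 : Tendsto (fun N => ∑ k ∈ Finset.range (N + 1), f k) atTop (𝓝 l) :=
    hl.comp (tendsto_add_atTop_nat 1)
  have := h2.sub hl
  rw [sub_self] at this
  refine this.congr fun N => ?_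
  rw [Finset.sum_range_succ]; ring

lemma seriesConv_of_eventually_zero {f : ℕ → ℝ} {K : ℕ} (h : ∀ k, K ≤ k → f k = 0) :
    Tendsto (fun N => ∑ k ∈ Finset.range N, f k) atTop (𝓝 (∑ k ∈ Finset.range K, f k)) := by
  have : ∀ N ≥ K, (fun N => ∑ k ∈ Finset.range N, f k) N = ∑ k ∈ Finset.range K, f k := by
    intro N hN
    exact (Finset.sum_subset (Finset.range_subset_range.2 hN) (fun k _ hk => h k (by
      simpa using hk))).symm
  exact Tendsto.congr' (eventually_atTop.2 ⟨K, fun N hN => (this N hN).symm⟩) tendsto_const_nhds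

lemma seriesSum_sub_bound {f g b : ℕ → ℝ} {K : ℕ} (hf : SeriesConv f) (hg : SeriesConv g)
    (hagree : ∀ k, k < K → f k = g k) (hb : ∀ k, |f k - g k| ≤ b k) (hb0 : ∀ k, 0 ≤ b k)
    (hbs : Summable b) {δ : ℝ} (htail : ∑' j, b (j + K) ≤ δ) :
    |seriesSum f - seriesSum g| ≤ δ := by
  obtain ⟨lf, hlf⟩ := hf
  obtain ⟨lg, hlg⟩ := hg
  rw [seriesSum_eq hlf, seriesSum_eq hlg]
  have hbs' : Summable (fun j => b (j + K)) := (summable_nat_add_iff K).2 hbs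
  refine le_of_tendsto ((hlf.sub hlg).abs) ?_
  filter_upwards [eventually_ge_atTop K] with N hN
  have h1 : (∑ k ∈ Finset.range N, f k) - ∑ k ∈ Finset.range N, g k
      = ∑ k ∈ Finset.Ico K N, (f k - g k) := by
    rw [← Finset.sum_sub_distrib]
    rw [Finset.range_eq_Ico, ← Finset.sum_Ico_consecutive _ (Nat.zero_le K) hN]
    have : ∑ k ∈ Finset.Ico 0 K, (f k - g k) = 0 := by
      apply Finset.sum_eq_zero
      intro k hk
      rw [Finset.mem_Ico] at hk
      rw [hagree k hk.2, sub_self]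
    rw [this, zero_add]
  rw [h1]
  calc |∑ k ∈ Finset.Ico K N, (f k - g k)| ≤ ∑ k ∈ Finset.Ico K N, |f k - g k| :=
        Finset.abs_sum_le_sum_abs _ _
    _ ≤ ∑ k ∈ Finset.Ico K N, b k := Finset.sum_le_sum fun k _ => hb k
    _ = ∑ j ∈ Finset.range (N - K), b (K + j) := Finset.sum_Ico_eq_sum_range _ _ _
    _ = ∑ j ∈ Finset.range (N - K), b (j + K) := by
        refine Finset.sum_congr rfl fun j _ => by rw [Nat.add_comm]
    _ ≤ ∑' j, b (j + K) := Summable.sum_le_tsum _ (fun j _ => hb0 _) hbs'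
    _ ≤ δ := htail

def Cyl (τ : MonoSeq) (K : ℕ) : Set MonoSeq := {σ | ∀ i, i < K → σ.1 i = τ.1 i}

lemma isOpen_cyl (τ : MonoSeq) (K : ℕ) : IsOpen (Cyl τ K) := by
  have : Cyl τ K = ⋂ i : Fin K, {σ : MonoSeq | σ.1 i.1 = τ.1 i.1} := by
    ext σ; simp [Cyl]
    constructor
    · intro h i; exact h i.1 i.2
    · intro h i hi; exact h ⟨i, hi⟩
  rw [this]
  refine isOpen_iInter_of_finite fun i => ?_
  have hc : Continuous fun σ : MonoSeq => σ.1 i.1 :=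
    (continuous_apply i.1).comp continuous_subtype_val
  exact (isOpen_discrete {τ.1 i.1}).preimage hc

lemma cyl_mem_nhds {U : Set MonoSeq} (hU : IsOpen U) {σ : MonoSeq} (hσ : σ ∈ U) :
    ∃ K, Cyl σ K ⊆ U := by
  obtain ⟨V, hV, rfl⟩ := isOpen_induced_iff.1 hU
  obtain ⟨I, u, hu, hsub⟩ := isOpen_pi_iff.1 hV σ.1 hσ
  classical
  refine ⟨(I.sup id) + 1, fun σ' hσ' => ?_⟩
  apply hsub
  intro i hi
  have : σ'.1 i = σ.1 i := hσ' i (Nat.lt_succ_of_le (Finset.le_sup (f := id) hi))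
  rw [this]; exact (hu i hi).2

/-- criterion for nowhere density via cylinders -/
lemma isNowhereDense_of_cyl {S : Set MonoSeq}
    (h : ∀ (σ₀ : MonoSeq) (K : ℕ), ∃ (τ : MonoSeq) (K' : ℕ), K ≤ K' ∧ τ ∈ Cyl σ₀ K ∧
      ∀ σ, σ ∈ Cyl τ K' → σ ∉ S) : IsNowhereDense S := by
  rw [IsNowhereDense, Set.eq_empty_iff_forall_notMem]
  intro σ₀ hσ₀
  obtain ⟨K, hK⟩ := cyl_mem_nhds isOpen_interior hσ₀
  obtain ⟨τ, K', hKK', hτ, hbad⟩ := h σ₀ K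
  have hτcl : τ ∈ closure S := interior_subset (hK hτ)
  have := (mem_closure_iff.1 hτcl) (Cyl τ K') (isOpen_cyl τ K') (fun i hi => rfl)
  obtain ⟨σ, hσ1, hσ2⟩ := this
  exact hbad σ hσ1 hσ2

lemma isMeagre_of_cyl {D : Set MonoSeq} {T : ℕ → Set MonoSeq} (hcov : D ⊆ ⋃ m, T m)
    (h : ∀ m, IsNowhereDense (T m)) : IsMeagre D := by
  refine IsMeagre.mono hcov ?_
  refine isMeagre_iUnion fun m => ?_
  rw [isMeagre_iff_countable_union_isNowhereDense]
  exact ⟨{T m}, by simpa using h m, Set.countable_singleton _, by simp⟩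

/-- extend a head by a strictly monotone tail -/
def mkExt (σ₀ : ℕ → ℕ) (K : ℕ) (g : ℕ → ℕ) : ℕ → ℕ :=
  fun i => if i < K then σ₀ i else g (i - K)

lemma mkExt_strictMono {σ₀ : ℕ → ℕ} (hσ₀ : StrictMono σ₀) {K : ℕ} {g : ℕ → ℕ}
    (hg : StrictMono g) (hgt : ∀ i, i < K → σ₀ i < g 0) : StrictMono (mkExt σ₀ K g) := by
  intro i j hij
  unfold mkExt
  by_cases hi : i < K <;> by_cases hj : j < K
  · simpa [hi, hj] using hσ₀ hij
  · simp only [if_pos hi, if_neg hj]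
    exact lt_of_lt_of_le (hgt i hi) (hg.monotone (Nat.zero_le _))
  · omega
  · simp only [if_neg hi, if_neg hj]
    exact hg (by omega)

lemma mkExt_cyl {σ₀ : ℕ → ℕ} {K : ℕ} {g : ℕ → ℕ} : ∀ i, i < K → mkExt σ₀ K g i = σ₀ i :=
  fun i hi => if_pos hi

lemma mkExt_tail {σ₀ : ℕ → ℕ} {K : ℕ} {g : ℕ → ℕ} (j : ℕ) : mkExt σ₀ K g (j + K) = g j := by
  simp [mkExt, Nat.add_sub_cancel]

/-- choose an increasing sequence with prescribed properties -/
lemma exists_strictMono_choice (P : ℕ → ℕ → Prop) (h : ∀ k N, ∃ v, N ≤ v ∧ P k v) (b : ℕ) :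
    ∃ g : ℕ → ℕ, StrictMono g ∧ b < g 0 ∧ ∀ k, P k (g k) := by
  classical
  let g : ℕ → ℕ := fun k => Nat.rec (Classical.choose (h 0 (b + 1)))
    (fun k gk => Classical.choose (h (k + 1) (gk + 1))) k
  have hg0 : b + 1 ≤ g 0 ∧ P 0 (g 0) := Classical.choose_spec (h 0 (b + 1))
  have hgs : ∀ k, g k + 1 ≤ g (k + 1) ∧ P (k + 1) (g (k + 1)) := fun k =>
    Classical.choose_spec (h (k + 1) (g k + 1))
  refine ⟨g, strictMono_nat_of_lt_succ (fun k => (hgs k).1), hg0.1, fun k => ?_⟩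
  cases k with
  | zero => exact hg0.2
  | succ k => exact (hgs k).2

lemma mul_sign_self (a : ℝ) : a * Real.sign a = |a| := by
  rcases lt_trichotomy a 0 with h | h | h
  · rw [Real.sign_of_neg h, abs_of_neg h]; ring
  · simp [h]
  · rw [Real.sign_of_pos h, abs_of_pos h]; ring

lemma abs_sign_le_one (a : ℝ) : |Real.sign a| ≤ 1 := by
  rcases Real.sign_apply_eq a with h | h | h <;> simp [h]


lemma col_tendsto_zero (hA : RegularMatrix A) (k : ℕ) : Tendsto (fun n => A n k) atTop (𝓝 0) := by
  set y : ℕ → ℝ := fun j => if j = k then (1:ℝ) else 0 with hy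
  have hy0 : Tendsto y atTop (𝓝 0) := by
    refine Tendsto.congr' ?_ tendsto_const_nhds
    filter_upwards [eventually_ge_atTop (k+1)] with j hj
    simp only [hy]
    rw [if_neg (by omega : ¬ j = k)]
  have h2 := (hA y 0 hy0).2
  refine Tendsto.congr (fun n => ?_) h2
  show matMul A y n = A n k
  have h0 : ∀ j, k + 1 ≤ j → A n j * y j = 0 := by
    intro j hj; simp only [hy]; rw [if_neg (by omega : ¬ j = k), mul_zero]
  have := seriesSum_eq (seriesConv_of_eventually_zero h0)
  rw [matMul, this]
  simp [hy, Finset.sum_ite_eq', Finset.mem_range]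

lemma rowsum_tendsto_one (hA : RegularMatrix A) : Tendsto (fun n => seriesSum (fun k => A n k * 1)) atTop (𝓝 1) :=
  (hA (fun _ => 1) 1 tendsto_const_nhds).2

lemma nat_rec_choice {Q : ℕ → ℕ → ℕ → Prop} (hex : ∀ j c, ∃ N, Q j c N) :
    ∃ K : ℕ → ℕ, K 0 = 0 ∧ ∀ j, Q j (K j) (K (j+1)) := by
  classical
  exact ⟨fun j => Nat.rec 0 (fun j Kj => Classical.choose (hex j Kj)) j, rfl,
    fun j => Classical.choose_spec (hex j _)⟩

lemma row_abs_summable (hA : RegularMatrix A) (n : ℕ) : Summable (fun k => |A n k|) := by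
  by_contra hsum
  set S : ℕ → ℝ := fun N => ∑ k ∈ Finset.range N, |A n k| with hSdef
  have hS : Tendsto S atTop atTop :=
    (not_summable_iff_tendsto_nat_atTop_of_nonneg (fun k => abs_nonneg _)).1 hsum
  have hex : ∀ (j c : ℕ), ∃ N, c < N ∧ S c + (j+1) ≤ S N := by
    intro j c
    obtain ⟨N, hN1, hN2⟩ := ((hS.eventually_ge_atTop (S c + (j+1))).and
      (eventually_ge_atTop (c+1))).exists
    exact ⟨N, by omega, hN1⟩
  classical
  obtain ⟨Kf, hKf0, hK1⟩ := nat_rec_choice (Q := fun j c N => c < N ∧ S c + (j+1) ≤ S N)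
    (fun j c => hex j c)
  have hKmono : StrictMono Kf := strictMono_nat_of_lt_succ fun j => (hK1 j).1
  set blk : ℕ → ℕ := fun k => Nat.findGreatest (fun j => Kf j ≤ k) k with hblkdef
  have hblk1 : ∀ k, Kf (blk k) ≤ k := by
    intro k
    exact Nat.findGreatest_spec (P := fun j => Kf j ≤ k) (m := 0) (n := k) (Nat.zero_le k)
      (by show Kf 0 ≤ k; rw [hKf0]; exact Nat.zero_le k)
  have hblk2 : ∀ j k, Kf j ≤ k → j ≤ blk k := fun j k h =>
    Nat.le_findGreatest (le_trans (hKmono.le_apply) h) h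
  have hblk3 : ∀ k, k < Kf (blk k + 1) := by
    intro k
    by_contra hc
    have := hblk2 (blk k + 1) k (by omega)
    omega
  set y : ℕ → ℝ := fun k => Real.sign (A n k) * (1/(blk k + 1)) with hydef
  have hy0 : Tendsto y atTop (𝓝 0) := by
    have hblk_t : Tendsto blk atTop atTop :=
      tendsto_atTop_atTop.2 fun j => ⟨Kf j, fun k hk => hblk2 j k hk⟩
    have h1 : Tendsto (fun k => 1/((blk k : ℝ)+1)) atTop (𝓝 0) :=
      tendsto_one_div_add_atTop_nhds_zero_nat.comp hblk_t
    refine squeeze_zero_norm (fun k => ?_) h1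
    rw [hydef]
    simp only [norm_mul, Real.norm_eq_abs]
    calc |Real.sign (A n k)| * |1/((blk k:ℝ)+1)| ≤ 1 * (1/((blk k:ℝ)+1)) := by
          apply mul_le_mul (abs_sign_le_one _) (le_of_eq (abs_of_nonneg (by positivity)))
            (abs_nonneg _) zero_le_one
      _ = 1/((blk k:ℝ)+1) := one_mul _
  have hterm : ∀ k, A n k * y k = |A n k| * (1/(blk k + 1)) := by
    intro k; rw [hydef]; dsimp only; rw [← mul_assoc, mul_sign_self]
  set S' : ℕ → ℝ := fun N => ∑ k ∈ Finset.range N, A n k * y k with hS'def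
  have hS'mono : Monotone S' := by
    apply monotone_nat_of_le_succ
    intro N
    rw [hS'def]; dsimp only
    rw [Finset.sum_range_succ, hterm N]
    have : (0:ℝ) ≤ |A n N| * (1/(blk N + 1)) := by positivity
    linarith
  have hgrow : ∀ j : ℕ, (j:ℝ) ≤ S' (Kf j) := by
    intro j
    induction j with
    | zero => simp [hS'def, hKf0]
    | succ j ih =>
      have hsplit : S' (Kf (j+1)) = S' (Kf j) + ∑ k ∈ Finset.Ico (Kf j) (Kf (j+1)), A n k * y k := by
        rw [hS'def]; dsimp only
        simp only [Finset.range_eq_Ico]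
        exact (Finset.sum_Ico_consecutive _ (Nat.zero_le (Kf j)) (le_of_lt (hK1 j).1)).symm
      have hblkeq : ∀ k ∈ Finset.Ico (Kf j) (Kf (j+1)), A n k * y k = |A n k| * (1/(j+1)) := by
        intro k hk
        rw [Finset.mem_Ico] at hk
        have h1 : j ≤ blk k := hblk2 j k hk.1
        have h2 : blk k ≤ j := by
          by_contra hc
          have := hKmono.monotone (show j + 1 ≤ blk k by omega)
          have := hblk1 k
          omega
        rw [hterm k, (by omega : blk k = j)]
      have hblock : ∑ k ∈ Finset.Ico (Kf j) (Kf (j+1)), A n k * y k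
          = (S (Kf (j+1)) - S (Kf j)) * (1/(j+1)) := by
        rw [Finset.sum_congr rfl hblkeq, ← Finset.sum_mul]
        congr 1
        rw [hSdef]; dsimp only
        simp only [Finset.range_eq_Ico]
        rw [← Finset.sum_Ico_consecutive (fun k => |A n k|) (Nat.zero_le (Kf j)) (le_of_lt (hK1 j).1)]
        ring
      have hge : (1:ℝ) ≤ (S (Kf (j+1)) - S (Kf j)) * (1/(j+1)) := by
        have h2 := (hK1 j).2
        have hj1 : (0:ℝ) < (j:ℝ)+1 := by positivity
        rw [mul_one_div, le_div_iff₀ hj1]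
        push_cast at h2 ⊢
        linarith
      rw [hsplit, hblock]
      push_cast
      linarith
  obtain ⟨l, hl⟩ := (hA y 0 hy0).1 n
  have hev : ∀ᶠ N in atTop, S' N < l + 1 := by
    have := hl.eventually (eventually_lt_nhds (show l < l + 1 by linarith))
    exact this
  obtain ⟨N0, hN0⟩ := eventually_atTop.1 hev
  set j := N0 + Nat.ceil l + 1 with hj
  have h1 : (j:ℝ) ≤ S' (Kf j) := hgrow j
  have h2 : S' (Kf j) < l + 1 := hN0 _ (le_trans (by omega) hKmono.le_apply)
  have h3 : l ≤ (Nat.ceil l : ℝ) := Nat.le_ceil l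
  have : ((N0 + Nat.ceil l + 1 : ℕ):ℝ) ≥ l + 1 := by push_cast; linarith
  rw [← hj] at this
  linarith

lemma tendsto_comp_mkExt {x : ℕ → ℝ} {ℓ : ℝ} {σ₀ : ℕ → ℕ} {K : ℕ} {g : ℕ → ℕ}
    (hg : ∀ j, |x (g j) - ℓ| < 1/(j+1)) :
    Tendsto (fun k => x (mkExt σ₀ K g k)) atTop (𝓝 ℓ) := by
  rw [Metric.tendsto_atTop]
  intro ε hε
  obtain ⟨J, hJ⟩ := exists_nat_one_div_lt hε
  refine ⟨K + J, fun k hk => ?_⟩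
  have h1 : mkExt σ₀ K g k = g (k - K) := by
    rw [mkExt, if_neg (by omega)]
  rw [Real.dist_eq, h1]
  calc |x (g (k - K)) - ℓ| < 1/((k-K:ℕ)+1) := hg (k - K)
    _ ≤ 1/((J:ℝ)+1) := by
        apply one_div_le_one_div_of_le (by positivity)
        have h9 : (J:ℝ) ≤ ((k - K : ℕ):ℝ) := Nat.cast_le.2 (by omega)
        linarith
    _ < ε := hJ

lemma cluster_prop {x : ℕ → ℝ} {ℓ : ℝ} {φ : ℕ → ℕ} (hφ : StrictMono φ)
    (h : Tendsto (x ∘ φ) atTop (𝓝 ℓ)) :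
    ∀ η : ℝ, 0 < η → ∀ N, ∃ v, N ≤ v ∧ |x v - ℓ| < η := by
  intro η hη N
  obtain ⟨N0, hN0⟩ := Metric.tendsto_atTop.1 h η hη
  refine ⟨φ (max N0 N), le_trans (le_max_right N0 N) (hφ.le_apply), ?_⟩
  have := hN0 (max N0 N) (le_max_left N0 N)
  rwa [Real.dist_eq] at this

lemma escape_cluster {x : ℕ → ℝ} {A : ℕ → ℕ → ℝ} (hA : RegularMatrix A) {M : ℝ}
    (hM : ∀ v, |x v| ≤ M) {ℓ : ℝ} (hc : ∀ η : ℝ, 0 < η → ∀ N, ∃ v, N ≤ v ∧ |x v - ℓ| < η)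
    (σ₀ : MonoSeq) (K0 : ℕ) {ε : ℝ} (hε : 0 < ε) (m : ℕ) :
    ∃ (τ : MonoSeq) (K' : ℕ) (n : ℕ), K0 ≤ K' ∧ m ≤ n ∧ τ ∈ Cyl σ₀ K0 ∧
      ∀ σ : MonoSeq, σ ∈ Cyl τ K' → RowsConv A (fun k => x (σ.1 k)) →
        |matMul A (fun k => x (σ.1 k)) n - ℓ| ≤ 2*ε := by
  obtain ⟨g, hgmono, hgb, hgprop⟩ := exists_strictMono_choice
    (fun j v => |x v - ℓ| < 1/(j+1)) (fun j N => hc (1/(j+1)) (by positivity) N) (σ₀.1 K0)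
  set τ : MonoSeq := ⟨mkExt σ₀.1 K0 g, mkExt_strictMono σ₀.2 hgmono
    (fun i hi => lt_of_le_of_lt (σ₀.2.monotone (le_of_lt hi)) hgb)⟩ with hτdef
  have hτx : Tendsto (fun k => x (τ.1 k)) atTop (𝓝 ℓ) := tendsto_comp_mkExt hgprop
  obtain ⟨hτrows, hτlim⟩ := hA _ ℓ hτx
  obtain ⟨N1, hN1⟩ := Metric.tendsto_atTop.1 hτlim ε hε
  set n := max N1 m with hn
  have hmn : m ≤ n := le_max_right _ _
  have hτn : |matMul A (fun k => x (τ.1 k)) n - ℓ| < ε := by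
    have := hN1 n (le_max_left _ _); rwa [Real.dist_eq] at this
  have hM0 : 0 ≤ M := le_trans (abs_nonneg _) (hM 0)
  set b : ℕ → ℝ := fun k => |A n k| * (2*M) with hb
  have hbs : Summable b := (row_abs_summable hA n).mul_right _
  have htail0 : Tendsto (fun K => ∑' j, b (j + K)) atTop (𝓝 0) := tendsto_sum_nat_add b
  obtain ⟨K', hK'1, hK'2⟩ := ((htail0.eventually (eventually_le_nhds hε)).and
    (eventually_ge_atTop K0)).exists
  refine ⟨τ, K', n, hK'2, hmn, fun i hi => mkExt_cyl i hi, fun σ hσcyl hσrows => ?_⟩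
  have hdiff : |matMul A (fun k => x (σ.1 k)) n - matMul A (fun k => x (τ.1 k)) n| ≤ ε := by
    refine le_trans (seriesSum_sub_bound (hσrows n) (hτrows n) ?_ ?_ ?_ hbs (le_refl _)) hK'1
    · intro k hk
      show A n k * x (σ.1 k) = A n k * x (τ.1 k)
      rw [hσcyl k hk]
    · intro k
      show |A n k * x (σ.1 k) - A n k * x (τ.1 k)| ≤ b k
      rw [← mul_sub, abs_mul, hb]
      apply mul_le_mul_of_nonneg_left _ (abs_nonneg _)
      calc |x (σ.1 k) - x (τ.1 k)| ≤ |x (σ.1 k)| + |x (τ.1 k)| := abs_sub _ _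
        _ ≤ 2*M := by linarith [hM (σ.1 k), hM (τ.1 k)]
    · intro k
      show (0:ℝ) ≤ b k
      rw [hb]; positivity
  calc |matMul A (fun k => x (σ.1 k)) n - ℓ|
      ≤ |matMul A (fun k => x (σ.1 k)) n - matMul A (fun k => x (τ.1 k)) n|
        + |matMul A (fun k => x (τ.1 k)) n - ℓ| := abs_sub_le _ _ _
    _ ≤ 2*ε := by linarith

/-- If `x` is divergent and `A` is regular, then
Σ_{x,A} = {σ ∈ Σ : Aσ(x) is well defined and convergent} is meager in Σ. -/
theorem stmt_4 (x : ℕ → ℝ) (hx : ¬ ∃ l : ℝ, Tendsto x atTop (𝓝 l))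
    (A : ℕ → ℕ → ℝ) (hA : RegularMatrix A) :
    IsMeagre {σ : MonoSeq | RowsConv A (fun k => x (σ.1 k)) ∧
      ∃ l : ℝ, Tendsto (matMul A (fun k => x (σ.1 k))) atTop (𝓝 l)} := by
  set D := {σ : MonoSeq | RowsConv A (fun k => x (σ.1 k)) ∧
      ∃ l : ℝ, Tendsto (matMul A (fun k => x (σ.1 k))) atTop (𝓝 l)} with hD
  by_cases hbdd : ∃ M : ℝ, ∀ v, |x v| ≤ M
  · -- bounded case
    obtain ⟨M, hM⟩ := hbdd
    have hicc : ∀ v, x v ∈ Set.Icc (-M) M := fun v => by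
      have := hM v; rw [abs_le] at this; exact this
    obtain ⟨ℓ1, -, φ1, hφ1, hφ1t⟩ :=
      tendsto_subseq_of_bounded (Metric.isBounded_Icc (-M) M) hicc
    have hnot : ¬ Tendsto x atTop (𝓝 ℓ1) := fun h => hx ⟨ℓ1, h⟩
    rw [Metric.tendsto_atTop] at hnot
    push_neg at hnot
    obtain ⟨ε0, hε0, hfreq⟩ := hnot
    obtain ⟨ψ, hψmono, -, hψprop⟩ := exists_strictMono_choice
      (fun _ v => ε0 ≤ dist (x v) ℓ1) (fun _ N => hfreq N) 0
    have hicc2 : ∀ k, (x ∘ ψ) k ∈ Set.Icc (-M) M := fun k => hicc (ψ k)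
    obtain ⟨ℓ2, -, φ2, hφ2, hφ2t⟩ :=
      tendsto_subseq_of_bounded (Metric.isBounded_Icc (-M) M) hicc2
    have hsep : ε0 ≤ |ℓ2 - ℓ1| := by
      have ht : Tendsto (fun k => |x (ψ (φ2 k)) - ℓ1|) atTop (𝓝 |ℓ2 - ℓ1|) :=
        ((hφ2t.sub_const ℓ1).abs)
      refine ge_of_tendsto ht (Eventually.of_forall fun k => ?_)
      have := hψprop (φ2 k); rwa [Real.dist_eq] at this
    have hc1 : ∀ η : ℝ, 0 < η → ∀ N, ∃ v, N ≤ v ∧ |x v - ℓ1| < η := cluster_prop hφ1 hφ1t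
    have hc2 : ∀ η : ℝ, 0 < η → ∀ N, ∃ v, N ≤ v ∧ |x v - ℓ2| < η :=
      cluster_prop (hψmono.comp hφ2) hφ2t
    set p := min ℓ1 ℓ2 with hp
    set q := max ℓ1 ℓ2 with hq
    have hcp : ∀ η : ℝ, 0 < η → ∀ N, ∃ v, N ≤ v ∧ |x v - p| < η := by
      rcases min_cases ℓ1 ℓ2 with ⟨h1, -⟩ | ⟨h1, -⟩ <;> rw [hp, h1]
      exacts [hc1, hc2]
    have hcq : ∀ η : ℝ, 0 < η → ∀ N, ∃ v, N ≤ v ∧ |x v - q| < η := by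
      rcases max_cases ℓ1 ℓ2 with ⟨h1, -⟩ | ⟨h1, -⟩ <;> rw [hq, h1]
      exacts [hc1, hc2]
    have hpq : p < q := by
      rcases abs_cases (ℓ2 - ℓ1) with ⟨h1, -⟩ | ⟨h1, -⟩ <;>
        · rw [hp, hq]
          rcases le_total ℓ1 ℓ2 with h2 | h2 <;>
            simp only [min_eq_left, min_eq_right, max_eq_left, max_eq_right, h2] <;>
            nlinarith [hsep]
    set ε := (q - p)/6 with hεdef
    have hε : 0 < ε := by rw [hεdef]; linarith
    set T : ℕ → Set MonoSeq := fun m => {σ | RowsConv A (fun k => x (σ.1 k)) ∧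
      ∀ n n', m ≤ n → m ≤ n' → |matMul A (fun k => x (σ.1 k)) n
        - matMul A (fun k => x (σ.1 k)) n'| ≤ ε} with hT
    refine isMeagre_of_cyl (T := T) ?_ ?_
    · rintro σ ⟨hrow, l, hl⟩
      obtain ⟨N, hN⟩ := Metric.tendsto_atTop.1 hl (ε/2) (by linarith)
      refine Set.mem_iUnion.2 ⟨N, hrow, fun n n' hn hn' => ?_⟩
      have h1 := hN n hn
      have h2 := hN n' hn'
      rw [Real.dist_eq] at h1 h2
      calc |matMul A (fun k => x (σ.1 k)) n - matMul A (fun k => x (σ.1 k)) n'|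
          ≤ |matMul A (fun k => x (σ.1 k)) n - l| + |matMul A (fun k => x (σ.1 k)) n' - l| := by
            rw [← abs_neg (matMul A (fun k => x (σ.1 k)) n' - l)]
            refine le_trans (le_of_eq (by ring_nf)) (abs_add_le _ _)
        _ ≤ ε := by linarith
    · intro m
      refine isNowhereDense_of_cyl fun σ₀ K0 => ?_
      obtain ⟨τ1, K1, n, hK01, hmn, hτ1cyl, hbound1⟩ := escape_cluster hA hM hcp σ₀ K0 hε m
      obtain ⟨τ2, K2, n', hK12, hmn', hτ2cyl, hbound2⟩ := escape_cluster hA hM hcq τ1 K1 hε m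
      refine ⟨τ2, K2, le_trans hK01 hK12, ?_, fun σ hσcyl hσT => ?_⟩
      · intro i hi
        rw [hτ2cyl i (lt_of_lt_of_le hi hK01)]
        exact hτ1cyl i hi
      · have hσ1 : σ ∈ Cyl τ1 K1 := by
          intro i hi
          rw [hσcyl i (lt_of_lt_of_le hi hK12)]
          exact hτ2cyl i hi
        have b1 := hbound1 σ hσ1 hσT.1
        have b2 := hbound2 σ hσcyl hσT.1
        have pair := hσT.2 n n' hmn hmn'
        rw [abs_le] at b1 b2 pair
        have h6 : 6*ε = q - p := by rw [hεdef]; ring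
        obtain ⟨p1, p2⟩ := pair
        obtain ⟨b11, b12⟩ := b1
        obtain ⟨b21, b22⟩ := b2
        have : matMul A (fun k => x (σ.1 k)) n - matMul A (fun k => x (σ.1 k)) n' ≤ ε := p2
        linarith
  · -- unbounded case
    have hunb : ∀ (M : ℝ) (N : ℕ), ∃ v, N ≤ v ∧ M < |x v| := by
      intro M0 N0
      by_contra hcon
      push_neg at hcon
      exfalso
      apply hbdd
      refine ⟨max M0 ((Finset.range N0).sum fun v => |x v|), fun v => ?_⟩
      rcases lt_or_ge v N0 with hv | hv
      · refine le_trans ?_ (le_max_right _ _)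
        exact Finset.single_le_sum (f := fun w => |x w|) (fun i _ => abs_nonneg _)
          (Finset.mem_range.2 hv)
      · exact le_trans (hcon v hv) (le_max_left _ _)

    by_cases hrowinf : ∃ n0, {k | A n0 k ≠ 0}.Infinite
    · obtain ⟨n0, hinf⟩ := hrowinf
      set T : ℕ → Set MonoSeq := fun K => {σ | ∀ k, K ≤ k → |A n0 k * x (σ.1 k)| < 1} with hT
      refine isMeagre_of_cyl (T := T) ?_ ?_
      · rintro σ ⟨hrow, -⟩
        have hz := seriesConv_tendsto_zero (hrow n0)
        obtain ⟨K, hK⟩ := Metric.tendsto_atTop.1 hz 1 one_pos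
        refine Set.mem_iUnion.2 ⟨K, fun k hk => ?_⟩
        have := hK k hk
        rwa [Real.dist_eq, sub_zero] at this
      · intro K
        refine isNowhereDense_of_cyl fun σ₀ K0 => ?_
        obtain ⟨ks, hksmem, hksgt⟩ := hinf.exists_gt (max K K0)
        have hks1 : K ≤ ks := le_of_lt (lt_of_le_of_lt (le_max_left _ _) hksgt)
        have hks0 : K0 ≤ ks := le_of_lt (lt_of_le_of_lt (le_max_right _ _) hksgt)
        have hAne : A n0 ks ≠ 0 := hksmem
        have hApos : 0 < |A n0 ks| := abs_pos.2 hAne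
        obtain ⟨v, hv1, hv2⟩ := hunb (1/|A n0 ks|) (σ₀.1 ks)
        set τ : MonoSeq := ⟨mkExt σ₀.1 ks (fun j => v + j),
          mkExt_strictMono σ₀.2 (fun a b hab => by omega)
            (fun i hi => by
              have := σ₀.2 hi
              omega)⟩ with hτdef
        refine ⟨τ, ks + 1, by omega, fun i hi => mkExt_cyl i (by omega), fun σ hσcyl hσT => ?_⟩
        have hσks : σ.1 ks = v := by
          have h1 := hσcyl ks (by omega)
          have h2 : τ.1 ks = v := by
            have := mkExt_tail (σ₀ := σ₀.1) (K := ks) (g := fun j => v + j) 0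
            rw [Nat.zero_add] at this
            rw [hτdef] at *
            simpa using this
          rw [h1, h2]
        have := hσT ks hks1
        rw [hσks, abs_mul] at this
        rw [div_lt_iff₀ hApos] at hv2
        nlinarith
    · push_neg at hrowinf
      set T : ℕ → Set MonoSeq := fun m => {σ | ∀ n, m ≤ n →
        |matMul A (fun k => x (σ.1 k)) n| ≤ m} with hT
      refine isMeagre_of_cyl (T := T) ?_ ?_
      · rintro σ ⟨hrow, l, hl⟩
        obtain ⟨N, hN⟩ := Metric.tendsto_atTop.1 hl 1 one_pos
        refine Set.mem_iUnion.2 ⟨max N (Nat.ceil |l| + 1), fun n hn => ?_⟩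
        have h1 := hN n (le_trans (le_max_left _ _) hn)
        rw [Real.dist_eq] at h1
        have h2 : |matMul A (fun k => x (σ.1 k)) n| ≤ |l| + 1 := by
          have := abs_sub_abs_le_abs_sub (matMul A (fun k => x (σ.1 k)) n) l
          linarith
        have h3 : |l| + 1 ≤ (max N (Nat.ceil |l| + 1) : ℕ) := by
          have hle : ((Nat.ceil |l| + 1 : ℕ) : ℝ) ≤ ((max N (Nat.ceil |l| + 1) : ℕ) : ℝ) := by
            exact_mod_cast Nat.cast_le.2 (le_max_right _ _)
          have := Nat.le_ceil |l|
          push_cast at hle ⊢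
          linarith
        linarith
      · intro m
        refine isNowhereDense_of_cyl fun σ₀ K0 => ?_
        -- find n ≥ m and k0 ≥ K0 with A n k0 ≠ 0
        have hstep : ∃ n, m ≤ n ∧ ∃ k0, K0 ≤ k0 ∧ A n k0 ≠ 0 := by
          by_contra hno
          push_neg at hno
          have h1 : ∀ n, m ≤ n → seriesSum (fun k => A n k * 1)
              = ∑ k ∈ Finset.range K0, A n k * 1 := by
            intro n hn
            exact seriesSum_eq (seriesConv_of_eventually_zero
              (fun k hk => by rw [hno n hn k hk, zero_mul]))
          have h2 : Tendsto (fun n => ∑ k ∈ Finset.range K0, A n k * 1) atTop (𝓝 0) := by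
            have := tendsto_finset_sum (Finset.range K0)
              (fun k _ => (col_tendsto_zero hA k).mul_const 1)
            simpa using this
          have h3 : Tendsto (fun n => ∑ k ∈ Finset.range K0, A n k * 1) atTop (𝓝 1) := by
            refine Tendsto.congr' ?_ (rowsum_tendsto_one hA)
            filter_upwards [eventually_ge_atTop m] with n hn
            exact h1 n hn
          exact one_ne_zero (tendsto_nhds_unique h3 h2)
        obtain ⟨n, hmn, k0, hk0, hAk0⟩ := hstep
        have hfinn : {k | A n k ≠ 0}.Finite := hrowinf n
        set Fn := hfinn.toFinset with hFn
        have hk0mem : k0 ∈ Fn := by rw [Set.Finite.mem_toFinset]; exact hAk0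
        have hFne : Fn.Nonempty := ⟨k0, hk0mem⟩
        set ks := Fn.max' hFne with hks
        have hksne : A n ks ≠ 0 := (Set.Finite.mem_toFinset _).1 (Fn.max'_mem hFne)
        have hk0ks : k0 ≤ ks := Fn.le_max' k0 hk0mem
        have hK0ks : K0 ≤ ks := le_trans hk0 hk0ks
        have hzero : ∀ k, ks < k → A n k = 0 := by
          intro k hk
          by_contra hne
          have h5 : k ∈ Fn := (Set.Finite.mem_toFinset _).2 hne
          have := Fn.le_max' k h5
          omega
        have hApos : 0 < |A n ks| := abs_pos.2 hksne
        set C := ∑ k ∈ Finset.range ks, A n k * x (σ₀.1 k) with hC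
        obtain ⟨v, hv1, hv2⟩ := hunb ((m + 1 + |C|)/|A n ks|) (σ₀.1 ks)
        set τ : MonoSeq := ⟨mkExt σ₀.1 ks (fun j => v + j),
          mkExt_strictMono σ₀.2 (fun a b hab => by show v + a < v + b; omega)
            (fun i hi => by
              show σ₀.1 i < v + 0
              have := σ₀.2 hi
              omega)⟩ with hτdef
        refine ⟨τ, ks + 1, by omega, fun i hi => mkExt_cyl i (by omega), fun σ hσcyl hσT => ?_⟩
        have hτks : τ.1 ks = v := by
          show mkExt σ₀.1 ks (fun j => v + j) ks = v
          simp [mkExt]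
        have hσks : σ.1 ks = v := by rw [hσcyl ks (by omega), hτks]
        have hagree : ∀ k, k < ks → σ.1 k = σ₀.1 k := fun k hk => by
          rw [hσcyl k (by omega)]
          exact mkExt_cyl k hk
        have hzero' : ∀ k, ks + 1 ≤ k → A n k * x (σ.1 k) = 0 := fun k hk => by
          rw [hzero k (by omega), zero_mul]
        have hval : matMul A (fun k => x (σ.1 k)) n = C + A n ks * x v := by
          have h4 := seriesSum_eq (seriesConv_of_eventually_zero hzero')
          show seriesSum (fun k => A n k * x (σ.1 k)) = C + A n ks * x v
          rw [h4, Finset.sum_range_succ, hσks, hC]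
          congr 1
          refine Finset.sum_congr rfl fun k hk => ?_
          rw [hagree k (Finset.mem_range.1 hk)]
        have hbig := hσT n hmn
        rw [hval] at hbig
        have h6 : m + 1 + |C| < |x v| * |A n ks| := (div_lt_iff₀ hApos).1 hv2
        have h7 : |A n ks * x v| ≤ |C + A n ks * x v| + |C| := by
          have h8 := abs_sub (C + A n ks * x v) C
          simpa using h8
        rw [abs_mul] at h7
        nlinarith [abs_nonneg C]
end

section
/- Let I be a Borel ideal on ℕ which does not contain an isomorphic copy of the ideal Fin×Fin. Then a real sequence x is convergent if and only if the set {σ ∈ Σ : σ(x) is I-convergent} is not meager in Σ. -/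
open Filter Topology

/-! ### Auxiliary material for the proof of Statement 6 -/

section Stmt6Aux

lemma chi_injective' : Function.Injective chi := by
  intro S T h
  ext n
  exact decide_eq_decide.mp (congrFun h n)

lemma chi_eq_true_iff' {S : Set ℕ} {n : ℕ} : chi S n = true ↔ n ∈ S := by
  simp only [chi, decide_eq_true_eq]

/-- Finite cylinders are open in the Cantor space. -/
lemma isOpen_cyl' (g : ℕ → Bool) (n : ℕ) : IsOpen {f : ℕ → Bool | ∀ i < n, f i = g i} := by
  have : {f : ℕ → Bool | ∀ i < n, f i = g i}
      = ⋂ i ∈ Finset.range n, (fun f : ℕ → Bool => f i) ⁻¹' {g i} := by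
    ext f; simp [Finset.mem_range]
  rw [this]
  exact isOpen_biInter_finset fun i _ =>
    (continuous_apply i).isOpen_preimage _ (isOpen_discrete _)

/-- Jalali-Naini / Talagrand: a Borel ideal is a meager subset of the Cantor space. -/
lemma ideal_chi_meagre' {I : Set (Set ℕ)} (hI : IsIdeal I) (hB : BorelFamily I) :
    IsMeagre (chi '' I) := by
  by_contra hNM
  letI : MeasurableSpace (ℕ → Bool) := borel _
  haveI : BorelSpace (ℕ → Bool) := ⟨rfl⟩
  have hBM : BaireMeasurableSet (chi '' I) := MeasurableSet.baireMeasurableSet hB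
  obtain ⟨U, hUo, hUe⟩ := hBM.residualEq_isOpen
  have hE : {f : ℕ → Bool | f ∈ chi '' I ↔ f ∈ U} ∈ residual (ℕ → Bool) := by
    filter_upwards [hUe] with f hf
    exact eq_iff_iff.mp hf
  -- U is nonempty, otherwise chi '' I would be meager
  rcases Set.eq_empty_or_nonempty U with hU0 | ⟨g, hg⟩
  · apply hNM
    have : chi '' I ⊆ {f : ℕ → Bool | f ∈ chi '' I ↔ f ∈ U}ᶜ := by
      intro f hf hfE
      have := hfE.1 hf
      rw [hU0] at this
      exact this
    exact IsMeagre.mono this (by rwa [IsMeagre, compl_compl])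
  -- find a cylinder inside U
  obtain ⟨J, u, hu, hpi⟩ := isOpen_pi_iff.mp hUo g hg
  set n₀ : ℕ := J.sup id + 1 with hn₀
  have hJlt : ∀ i ∈ J, i < n₀ := fun i hi =>
    Nat.lt_succ_of_le (Finset.le_sup (f := id) hi)
  set V : Set (ℕ → Bool) := {f | ∀ i < n₀, f i = g i} with hV
  have hgV : g ∈ V := fun i _ => rfl
  have hVU : V ⊆ U := by
    intro f hf
    apply hpi
    intro i hi
    rw [hf i (hJlt i hi)]
    exact (hu i hi).2
  -- the bit-flip homeomorphism above level n₀
  set φ : (ℕ → Bool) → (ℕ → Bool) := fun f k => if k < n₀ then f k else !f k with hφ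
  have hφinv : ∀ f, φ (φ f) = f := by
    intro f; funext k
    by_cases hk : k < n₀ <;> simp [hφ, hk]
  have hφc : Continuous φ := by
    apply continuous_pi
    intro k
    by_cases hk : k < n₀
    · simp only [hφ, if_pos hk]
      exact continuous_apply k
    · simp only [hφ, if_neg hk]
      exact (continuous_of_discreteTopology (f := fun b : Bool => !b)).comp (continuous_apply k)
  have hφo : IsOpenMap φ := by
    intro W hW
    have himg : φ '' W = φ ⁻¹' W := by
      ext f
      constructor
      · rintro ⟨f', hf', rfl⟩
        simpa [hφinv f'] using hf'
      · intro hf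
        exact ⟨φ f, hf, hφinv f⟩
    rw [himg]
    exact hW.preimage hφc
  have hφE : φ ⁻¹' {f : ℕ → Bool | f ∈ chi '' I ↔ f ∈ U} ∈ residual (ℕ → Bool) :=
    tendsto_residual_of_isOpenMap hφc hφo hE
  -- residual sets are dense (Cantor space is Polish, hence Baire)
  letI := TopologicalSpace.upgradeIsCompletelyMetrizable (ℕ → Bool)
  have hdense : Dense ({f : ℕ → Bool | f ∈ chi '' I ↔ f ∈ U} ∩
      φ ⁻¹' {f : ℕ → Bool | f ∈ chi '' I ↔ f ∈ U}) :=
    dense_of_mem_residual (Filter.inter_mem hE hφE)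
  obtain ⟨B, hBV, hB1, hB2⟩ :
      ∃ B, B ∈ V ∧ (B ∈ chi '' I ↔ B ∈ U) ∧ (φ B ∈ chi '' I ↔ φ B ∈ U) := by
    obtain ⟨B, hBV, hBC⟩ := hdense.inter_open_nonempty V (isOpen_cyl' g n₀) ⟨g, hgV⟩
    exact ⟨B, hBV, hBC.1, hBC.2⟩
  have hφBV : φ B ∈ V := by
    intro i hi
    simp only [hφ, if_pos hi]
    exact hBV i hi
  obtain ⟨S₁, hS₁I, hS₁⟩ := hB1.mpr (hVU hBV)
  obtain ⟨S₂, hS₂I, hS₂⟩ := hB2.mpr (hVU hφBV)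
  -- S₁ ∪ S₂ covers everything from n₀ on
  have hcover : (Set.univ : Set ℕ) ⊆ S₁ ∪ S₂ ∪ Set.Iio n₀ := by
    intro k _
    by_cases hk : k < n₀
    · exact Or.inr hk
    · rcases Bool.eq_false_or_eq_true (B k) with hb | hb
      · left; left
        rw [← chi_eq_true_iff' (S := S₁), hS₁]
        exact hb
      · left; right
        rw [← chi_eq_true_iff' (S := S₂), hS₂]
        simp [hφ, if_neg hk, hb]
  exact hI.univ_not_mem <| hI.mem_of_subset hcover <|
    hI.union_mem (hI.union_mem hS₁I hS₂I) (hI.finite_mem (Set.finite_Iio n₀))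

/-- an element of `C` (if `b = true`) or of `Cᶜ` (if `b = false`) above `m` -/
noncomputable def pickGt' {C : Set ℕ} (hC : C.Infinite) (hC' : Cᶜ.Infinite)
    (b : Bool) (m : ℕ) : ℕ :=
  if b then (hC.exists_gt m).choose else (hC'.exists_gt m).choose

lemma pickGt_gt' {C : Set ℕ} (hC : C.Infinite) (hC' : Cᶜ.Infinite) (b : Bool) (m : ℕ) :
    m < pickGt' hC hC' b m := by
  rcases b with _ | _
  · simpa only [pickGt', if_neg Bool.false_ne_true] using (hC'.exists_gt m).choose_spec.2
  · simpa only [pickGt', ↓reduceIte] using (hC.exists_gt m).choose_spec.2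

lemma pickGt_mem_true' {C : Set ℕ} (hC : C.Infinite) (hC' : Cᶜ.Infinite) (m : ℕ) :
    pickGt' hC hC' true m ∈ C := by
  simpa only [pickGt', ↓reduceIte] using (hC.exists_gt m).choose_spec.1

lemma pickGt_mem_false' {C : Set ℕ} (hC : C.Infinite) (hC' : Cᶜ.Infinite) (m : ℕ) :
    pickGt' hC hC' false m ∈ Cᶜ := by
  simpa only [pickGt', if_neg Bool.false_ne_true] using (hC'.exists_gt m).choose_spec.1

/-- The extension sequence: agrees with `σ` below `n`, and realizes the pattern `h`
with respect to `C` beyond `n`. -/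
noncomputable def extSeq' {C : Set ℕ} (hC : C.Infinite) (hC' : Cᶜ.Infinite)
    (σ : ℕ → ℕ) (n : ℕ) (h : ℕ → Bool) : ℕ → ℕ :=
  fun k => Nat.rec (if 0 < n then σ 0 else pickGt' hC hC' (h 0) 0)
    (fun k ih => if k + 1 < n then σ (k + 1) else pickGt' hC hC' (h (k + 1)) ih) k

lemma extSeq_lt' {C : Set ℕ} (hC : C.Infinite) (hC' : Cᶜ.Infinite) (σ : ℕ → ℕ) (n : ℕ)
    (h : ℕ → Bool) : ∀ k, k < n → extSeq' hC hC' σ n h k = σ k := by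
  intro k hk
  rcases k with _ | k
  · show (if 0 < n then σ 0 else pickGt' hC hC' (h 0) 0) = σ 0
    rw [if_pos hk]
  · show (if k + 1 < n then σ (k + 1) else pickGt' hC hC' (h (k + 1)) _) = σ (k + 1)
    rw [if_pos hk]

lemma extSeq_strictMono' {C : Set ℕ} (hC : C.Infinite) (hC' : Cᶜ.Infinite) (σ : ℕ → ℕ)
    (hσ : StrictMono σ) (n : ℕ) (h : ℕ → Bool) : StrictMono (extSeq' hC hC' σ n h) := by
  apply strictMono_nat_of_lt_succ
  intro k
  by_cases hk : k + 1 < n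
  · rw [extSeq_lt' hC hC' σ n h (k + 1) hk, extSeq_lt' hC hC' σ n h k (Nat.lt_of_succ_lt hk)]
    exact hσ (Nat.lt_succ_self k)
  · have : extSeq' hC hC' σ n h (k + 1)
        = pickGt' hC hC' (h (k + 1)) (extSeq' hC hC' σ n h k) := by
      show (if k + 1 < n then σ (k + 1) else pickGt' hC hC' (h (k + 1))
          (extSeq' hC hC' σ n h k)) = _
      rw [if_neg hk]
    rw [this]
    exact pickGt_gt' hC hC' _ _

lemma extSeq_decide' {C : Set ℕ} (hC : C.Infinite) (hC' : Cᶜ.Infinite) (σ : ℕ → ℕ) (n : ℕ)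
    (h : ℕ → Bool) (hagree : ∀ i < n, chi {j | σ j ∈ C} i = h i) :
    ∀ k, chi {j | extSeq' hC hC' σ n h j ∈ C} k = h k := by
  intro k
  by_cases hk : k < n
  · have : extSeq' hC hC' σ n h k = σ k := extSeq_lt' hC hC' σ n h k hk
    show @decide (extSeq' hC hC' σ n h k ∈ C) (Classical.dec _) = h k
    rw [this]
    exact hagree k hk
  · have hval : extSeq' hC hC' σ n h k = pickGt' hC hC' (h k)
        (match k with
         | 0 => 0
         | (k' + 1) => extSeq' hC hC' σ n h k') := by
      rcases k with _ | k'
      · show (if 0 < n then σ 0 else pickGt' hC hC' (h 0) 0) = _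
        rw [if_neg hk]
      · show (if k' + 1 < n then σ (k' + 1) else pickGt' hC hC' (h (k' + 1))
            (extSeq' hC hC' σ n h k')) = _
        rw [if_neg hk]
    show @decide (extSeq' hC hC' σ n h k ∈ C) (Classical.dec _) = h k
    rw [hval]
    rcases Bool.eq_false_or_eq_true (h k) with hb | hb <;> rw [hb]
    · exact @decide_eq_true _ (Classical.dec _) (pickGt_mem_true' hC hC' _)
    · exact @decide_eq_false _ (Classical.dec _) (pickGt_mem_false' hC hC' _)

/-- The "trace on C" map from Σ to the Cantor space. -/
noncomputable def traceMap' (C : Set ℕ) : MonoSeq → (ℕ → Bool) :=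
  fun σ => chi {k | σ.1 k ∈ C}

lemma continuous_traceMap' (C : Set ℕ) : Continuous (traceMap' C) := by
  apply continuous_pi
  intro k
  exact (continuous_of_discreteTopology
      (f := fun m : ℕ => @decide (m ∈ C) (Classical.dec _))).comp
    ((continuous_apply k).comp continuous_subtype_val)

lemma isOpenMap_traceMap' {C : Set ℕ} (hC : C.Infinite) (hC' : Cᶜ.Infinite) :
    IsOpenMap (traceMap' C) := by
  intro W hW
  rw [isOpen_iff_forall_mem_open]
  rintro b ⟨σ, hσW, rfl⟩
  obtain ⟨W', hW', hWeq⟩ := isOpen_induced_iff.mp hW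
  have hσW' : σ.1 ∈ W' := by rw [← hWeq] at hσW; exact hσW
  obtain ⟨J, u, hu, hpi⟩ := isOpen_pi_iff.mp hW' σ.1 hσW'
  set n : ℕ := J.sup id + 1 with hn
  have hJlt : ∀ i ∈ J, i < n := fun i hi => Nat.lt_succ_of_le (Finset.le_sup (f := id) hi)
  refine ⟨{f | ∀ i < n, f i = traceMap' C σ i}, ?_, isOpen_cyl' _ _, fun i _ => rfl⟩
  intro h hcyl
  have hagree : ∀ i < n, chi {j | σ.1 j ∈ C} i = h i := fun i hi => (hcyl i hi).symm
  set τ : ℕ → ℕ := extSeq' hC hC' σ.1 n h with hτ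
  refine ⟨⟨τ, extSeq_strictMono' hC hC' σ.1 σ.2 n h⟩, ?_, ?_⟩
  · rw [← hWeq]
    show τ ∈ W'
    apply hpi
    intro i hi
    rw [hτ, extSeq_lt' hC hC' σ.1 n h i (hJlt i hi)]
    exact (hu i hi).2
  · funext k
    exact extSeq_decide' hC hC' σ.1 n h hagree k

/-- For a Borel ideal `I` and an infinite co-infinite set `C`, the set of `σ ∈ Σ` with
`σ⁻¹(C) ∈ I` is meager. -/
lemma trace_mem_meagre' {I : Set (Set ℕ)} (hI : IsIdeal I) (hB : BorelFamily I)
    {C : Set ℕ} (hC : C.Infinite) (hC' : Cᶜ.Infinite) :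
    IsMeagre {σ : MonoSeq | {k | σ.1 k ∈ C} ∈ I} := by
  have heq : {σ : MonoSeq | {k | σ.1 k ∈ C} ∈ I} = traceMap' C ⁻¹' (chi '' I) := by
    ext σ
    constructor
    · intro hσ
      exact Set.mem_image_of_mem chi hσ
    · rintro ⟨T, hT, hTeq⟩
      have := chi_injective' hTeq
      show {k | σ.1 k ∈ C} ∈ I
      rw [← this]
      exact hT
  rw [heq]
  exact (ideal_chi_meagre' hI hB).preimage_of_isOpenMap (continuous_traceMap' C)
    (isOpenMap_traceMap' hC hC')

lemma isClosed_strictMono' : IsClosed {f : ℕ → ℕ | StrictMono f} := by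
  have : {f : ℕ → ℕ | StrictMono f} = ⋂ n, {f : ℕ → ℕ | f n < f (n + 1)} := by
    ext f
    simp only [Set.mem_setOf_eq, Set.mem_iInter]
    exact ⟨fun h n => h (Nat.lt_succ_self n), fun h => strictMono_nat_of_lt_succ h⟩
  rw [this]
  refine isClosed_iInter fun n => ?_
  rw [← isOpen_compl_iff]
  have : {f : ℕ → ℕ | f n < f (n + 1)}ᶜ
      = (fun f : ℕ → ℕ => (f n, f (n + 1))) ⁻¹' {p : ℕ × ℕ | p.2 ≤ p.1} := by
    ext f
    simp [not_lt]
  rw [this]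
  exact ((continuous_apply n).prodMk (continuous_apply (n + 1))).isOpen_preimage _
    (isOpen_discrete _)

instance : Nonempty MonoSeq := ⟨⟨id, strictMono_id⟩⟩

instance : BaireSpace MonoSeq := by
  haveI : CompleteSpace MonoSeq := IsClosed.completeSpace_coe (hs := isClosed_strictMono')
  haveI : (uniformity MonoSeq).IsCountablyGenerated := by
    rw [uniformity_subtype]
    exact Filter.comap.isCountablyGenerated _ _
  exact BaireSpace.of_completelyPseudoMetrizable

lemma not_isMeagre_univ' : ¬ IsMeagre (Set.univ : Set MonoSeq) := by
  intro h
  rw [IsMeagre, Set.compl_univ] at h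
  exact (dense_of_mem_residual h).nonempty.ne_empty rfl

lemma finite_eventually' {s : Set ℕ} (hs : s.Finite) : ∀ᶠ n in atTop, n ∉ s := by
  rw [← Nat.cofinite_eq_atTop, Filter.eventually_cofinite]
  simpa using hs

lemma trichotomy' {x : ℕ → ℝ} (hx : ¬ ∃ l : ℝ, Tendsto x atTop (𝓝 l)) :
    Tendsto x atTop atTop ∨ Tendsto x atTop atBot ∨
    ∃ a b : ℝ, a < b ∧ {n | x n < a}.Infinite ∧ {n | b < x n}.Infinite := by
  by_cases hp : ∃ a b : ℝ, a < b ∧ {n | x n < a}.Infinite ∧ {n | b < x n}.Infinite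
  · exact Or.inr (Or.inr hp)
  have hP : ∀ a b : ℝ, a < b → {n | x n < a}.Finite ∨ {n | b < x n}.Finite := by
    intro a b hab
    by_cases h1 : {n | x n < a}.Finite
    · exact Or.inl h1
    · by_cases h2 : {n | b < x n}.Finite
      · exact Or.inr h2
      · exact absurd ⟨a, b, hab, h1, h2⟩ hp
  set L : Set ℝ := {a : ℝ | {n | x n < a}.Finite} with hL
  by_cases hLall : ∀ a : ℝ, a ∈ L
  · left
    rw [tendsto_atTop]
    intro b
    filter_upwards [finite_eventually' (hLall b)] with n hn
    exact not_lt.mp hn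
  by_cases hLnone : ∀ a : ℝ, a ∉ L
  · right; left
    rw [tendsto_atBot]
    intro b
    rcases hP (b - 1) b (by linarith) with h | h
    · exact absurd h (hLnone (b - 1))
    · filter_upwards [finite_eventually' h] with n hn
      exact not_lt.mp hn
  exfalso
  apply hx
  push_neg at hLall hLnone
  obtain ⟨a₁, ha₁⟩ := hLall
  obtain ⟨a₀, ha₀⟩ := hLnone
  have hbdd : ∀ a ∈ L, a ≤ a₁ := by
    intro a ha
    by_contra hlt
    exact ha₁ (ha.subset fun n hn => lt_trans hn (not_le.mp hlt))
  set c := sSup L with hc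
  refine ⟨c, Metric.tendsto_atTop.mpr fun ε hε => ?_⟩
  have h1 : {n | x n < c - ε / 2}.Finite := by
    obtain ⟨a, haL, hagt⟩ := exists_lt_of_lt_csSup ⟨a₀, ha₀⟩ (show c - ε / 2 < c by linarith)
    exact haL.subset fun n hn => lt_trans hn hagt
  have hc2 : (c + ε / 4) ∉ L := by
    intro hmem
    have := le_csSup ⟨a₁, hbdd⟩ hmem
    linarith
  have h2 : {n | c + ε / 2 < x n}.Finite := by
    rcases hP (c + ε / 4) (c + ε / 2) (by linarith) with h | h
    · exact absurd h hc2
    · exact h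
  have := (finite_eventually' (h1.union h2)).and (eventually_gt_atTop 0)
  rw [eventually_atTop] at this
  obtain ⟨N, hN⟩ := this
  refine ⟨N, fun n hn => ?_⟩
  obtain ⟨hn1, _⟩ := hN n hn
  rw [Set.mem_union] at hn1
  push_neg at hn1
  obtain ⟨hna, hnb⟩ := hn1
  rw [Set.mem_setOf_eq, not_lt] at hna hnb
  rw [Real.dist_eq, abs_lt]
  constructor <;> linarith

/-- If a sequence tends to `+∞` or `-∞`, then no subsequence of it is `I`-convergent. -/
lemma not_iconv_of_infty' {I : Set (Set ℕ)} (hI : IsIdeal I) {y : ℕ → ℝ}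
    (hy : Tendsto y atTop atTop ∨ Tendsto y atTop atBot) : ¬ IConv I y := by
  rintro ⟨η, hη⟩
  have h1 := hη 1 one_pos
  have hev : ∀ᶠ k in atTop, 1 < |y k - η| := by
    rcases hy with hy | hy
    · filter_upwards [hy.eventually_ge_atTop (η + 2)] with k hk
      have : 2 ≤ y k - η := by linarith
      calc (1 : ℝ) < 2 := one_lt_two
        _ ≤ y k - η := this
        _ ≤ |y k - η| := le_abs_self _
    · filter_upwards [hy.eventually_le_atBot (η - 2)] with k hk
      have : 2 ≤ -(y k - η) := by linarith
      calc (1 : ℝ) < 2 := one_lt_two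
        _ ≤ -(y k - η) := this
        _ ≤ |y k - η| := neg_le_abs _
  rw [eventually_atTop] at hev
  obtain ⟨N, hN⟩ := hev
  have hsub : {k | 1 < |y k - η|}ᶜ ⊆ Set.Iio N := by
    intro k hk
    by_contra hkN
    exact hk (hN k (not_lt.mp hkN))
  have hcov : (Set.univ : Set ℕ) ⊆ {k | 1 < |y k - η|} ∪ {k | 1 < |y k - η|}ᶜ := by
    intro k _
    exact (em _).imp id id
  exact hI.univ_not_mem <| hI.mem_of_subset hcov <|
    hI.union_mem h1 (hI.mem_of_subset hsub (hI.finite_mem (Set.finite_Iio N)))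

end Stmt6Aux

/-- For a Borel ideal `I` not containing an isomorphic copy of Fin×Fin,
`x` is convergent iff `{σ ∈ Σ : σ(x) is I-convergent}` is non-meager in Σ. -/
theorem stmt_6 (I : Set (Set ℕ)) (hI : IsIdeal I) (hIBorel : BorelFamily I)
    (hIcopy : ¬ ContainsIsoCopy I FinTimesFin) (x : ℕ → ℝ) :
    (∃ l : ℝ, Tendsto x atTop (𝓝 l)) ↔
      ¬ IsMeagre {σ : MonoSeq | IConv I (fun n => x (σ.1 n))} := by
  constructor
  · -- forward: x convergent implies the set is all of Σ, which is non-meager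
    rintro ⟨l, hl⟩ hM
    apply not_isMeagre_univ'
    apply hM.mono
    intro σ _
    refine ⟨l, fun ε hε => ?_⟩
    have ht : Tendsto (fun k => x (σ.1 k)) atTop (𝓝 l) := hl.comp σ.2.tendsto_atTop
    obtain ⟨N, hN⟩ := Metric.tendsto_atTop.mp ht ε hε
    have hsub : {k | ε < |x (σ.1 k) - l|} ⊆ Set.Iio N := by
      intro k hk
      by_contra hkN
      have := hN k (not_lt.mp hkN)
      rw [Real.dist_eq] at this
      exact absurd this (not_lt.mpr (le_of_lt hk))
    exact hI.finite_mem ((Set.finite_Iio N).subset hsub)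
  · -- backward: contrapositive
    intro hNM
    by_contra hx
    apply hNM
    rcases trichotomy' hx with hT | hB | ⟨a, b, hab, hA, hB2⟩
    · apply IsMeagre.empty.mono
      rintro σ hσ
      exact not_iconv_of_infty' hI (Or.inl (hT.comp σ.2.tendsto_atTop)) hσ
    · apply IsMeagre.empty.mono
      rintro σ hσ
      exact not_iconv_of_infty' hI (Or.inr (hB.comp σ.2.tendsto_atTop)) hσ
    · -- main case: two separated infinite level sets
      set A : Set ℕ := {n | x n < a} with hAdef
      set B : Set ℕ := {n | b < x n} with hBdef
      have hAc : Aᶜ.Infinite := hB2.mono fun n hn => not_lt.mpr (le_of_lt (lt_trans hab hn))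
      have hBc : Bᶜ.Infinite := hA.mono fun n hn => not_lt.mpr (le_of_lt (lt_trans hn hab))
      have hMA := trace_mem_meagre' hI hIBorel hA hAc
      have hMB := trace_mem_meagre' hI hIBorel hB2 hBc
      have hun : IsMeagre ({σ : MonoSeq | {k | σ.1 k ∈ A} ∈ I}
          ∪ {σ : MonoSeq | {k | σ.1 k ∈ B} ∈ I}) := by
        rw [IsMeagre, Set.compl_union]
        exact Filter.inter_mem hMA hMB
      apply hun.mono
      rintro σ ⟨η, hη⟩
      have hε : (0 : ℝ) < (b - a) / 4 := by linarith
      by_cases hcase : η ≤ (a + b) / 2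
      · right
        refine hI.mem_of_subset ?_ (hη ((b - a) / 4) hε)
        intro k hk
        have hxk : b < x (σ.1 k) := hk
        have h1 : (b - a) / 4 < x (σ.1 k) - η := by linarith
        exact lt_of_lt_of_le h1 (le_abs_self _)
      · left
        refine hI.mem_of_subset ?_ (hη ((b - a) / 4) hε)
        intro k hk
        have hxk : x (σ.1 k) < a := hk
        have h1 : (b - a) / 4 < -(x (σ.1 k) - η) := by linarith
        exact lt_of_lt_of_le h1 (neg_le_abs _)
end

section
/- Fix a bounded divergent real sequence x, an ideal I on ℕ, and a (Fin,I)-regular infinite real matrix A. Then the set Σ_{x,A}(I) = {σ ∈ Σ : Aσ(x) is well defined and I-convergent} is dense in Σ, and the map T : Σ_{x,A}(I) → ℝ sending σ to the I-limit of Aσ(x) is discontinuous at every point of Σ_{x,A}(I). -/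
open Filter Topology

/-- Uniqueness of I-limits. -/
lemma iconv_unique {I : Set (Set ℕ)} (hI : IsIdeal I) {y : ℕ → ℝ} {η η' : ℝ}
    (h1 : IConvTo I y η) (h2 : IConvTo I y η') : η = η' := by
  by_contra hne
  have habs : 0 < |η - η'| := abs_pos.2 (sub_ne_zero.2 hne)
  set ε := |η - η'| / 3 with hεdef
  have hε : 0 < ε := by positivity
  have hc : Set.univ ⊆ {n | ε < |y n - η|} ∪ {n | ε < |y n - η'|} := by
    intro n _
    by_contra h
    simp only [Set.mem_union, Set.mem_setOf_eq, not_or, not_lt] at h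
    have h3 : |η - η'| ≤ |y n - η| + |y n - η'| := by
      have := abs_sub_abs_le_abs_sub (y n - η) (y n - η')
      have h4 := abs_sub (η) (η')
      calc |η - η'| = |(y n - η') - (y n - η)| := by ring_nf
        _ ≤ |y n - η'| + |y n - η| := abs_sub _ _
        _ = |y n - η| + |y n - η'| := by ring
    have := h.1
    have := h.2
    have : |η - η'| ≤ 2 * ε := by linarith
    rw [hεdef] at this
    linarith
  exact hI.univ_not_mem (hI.mem_of_subset hc (hI.union_mem (h1 ε hε) (h2 ε hε)))

/-- A bounded divergent sequence has two subsequences converging to distinct limits. -/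
lemma two_sublimits (x : ℕ → ℝ) (hxb : Bdd x) (hx : ¬ ∃ l : ℝ, Tendsto x atTop (𝓝 l)) :
    ∃ a b : ℝ, a ≠ b ∧
      (∃ τ : ℕ → ℕ, StrictMono τ ∧ Tendsto (fun n => x (τ n)) atTop (𝓝 a)) ∧
      (∃ τ : ℕ → ℕ, StrictMono τ ∧ Tendsto (fun n => x (τ n)) atTop (𝓝 b)) := by
  obtain ⟨M, hM⟩ := hxb
  have hmem : ∀ n, x n ∈ Set.Icc (-M) M := fun n => abs_le.1 (hM n)
  obtain ⟨a, -, φ, hφ, hφa⟩ := tendsto_subseq_of_bounded (Metric.isBounded_Icc (-M) M) hmem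
  have hna : ¬ Tendsto x atTop (𝓝 a) := fun h => hx ⟨a, h⟩
  rw [Metric.tendsto_atTop] at hna
  push_neg at hna
  obtain ⟨ε, hε, hfreq⟩ := hna
  have hfr : ∃ᶠ n in atTop, ε ≤ dist (x n) a := by
    rw [Filter.frequently_atTop]
    intro N
    obtain ⟨n, hn1, hn2⟩ := hfreq N
    exact ⟨n, hn1, hn2⟩
  obtain ⟨ψ, hψ, hψp⟩ := Filter.extraction_of_frequently_atTop hfr
  obtain ⟨b, -, ρ, hρ, hρb⟩ := tendsto_subseq_of_bounded (Metric.isBounded_Icc (-M) M)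
    (fun n => hmem (ψ n))
  have hba : ε ≤ dist b a := by
    have hd : Tendsto (fun n => dist (x (ψ (ρ n))) a) atTop (𝓝 (dist b a)) :=
      hρb.dist tendsto_const_nhds
    exact ge_of_tendsto' hd (fun n => hψp (ρ n))
  refine ⟨a, b, ?_, ⟨φ, hφ, hφa⟩, ⟨ψ ∘ ρ, hψ.comp hρ, hρb⟩⟩
  intro h
  rw [h] at hba
  simp [dist_self] at hba
  linarith

/-- Extension of a prefix of σ by a convergent subsequence of x. -/
lemma exists_extension (x : ℕ → ℝ) (hxb : Bdd x) (I : Set (Set ℕ)) (A : ℕ → ℕ → ℝ)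
    (hA : FinIRegular I A) {a : ℝ} {τ : ℕ → ℕ} (hτ : StrictMono τ)
    (hτa : Tendsto (fun n => x (τ n)) atTop (𝓝 a)) (σ : MonoSeq) (N : ℕ) :
    ∃ σ' : MonoSeq, (∀ k < N, σ'.1 k = σ.1 k) ∧ σ' ∈ SigmaSet x A I ∧
      IConvTo I (matMul A (fun k => x (σ'.1 k))) a := by
  set M := σ.1 N + 1 with hMdef
  set f : ℕ → ℕ := fun n => if n < N then σ.1 n else τ (n + M) with hf
  have hτle : ∀ k, k ≤ τ k := fun k => hτ.le_apply
  have hfm : StrictMono f := by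
    apply strictMono_nat_of_lt_succ
    intro n
    by_cases h1 : n + 1 < N
    · simp only [hf, if_pos (Nat.lt_of_succ_lt h1), if_pos h1]
      exact σ.2 (Nat.lt_succ_self n)
    · by_cases h2 : n < N
      · simp only [hf, if_pos h2, if_neg h1]
        have h3 : σ.1 n < σ.1 N := σ.2 h2
        have h4 : n + 1 + M ≤ τ (n + 1 + M) := hτle _
        omega
      · simp only [hf, if_neg h1, if_neg h2]
        exact hτ (by omega)
  have htail : ∀ᶠ n in atTop, x (τ (n + M)) = x (f n) := by
    filter_upwards [Filter.eventually_ge_atTop N] with n hn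
    simp [hf, Nat.not_lt.2 hn]
  have hconv : Tendsto (fun n => x (f n)) atTop (𝓝 a) :=
    (hτa.comp (tendsto_add_atTop_nat M)).congr' htail
  obtain ⟨Mb, hMb⟩ := hxb
  obtain ⟨hrows, -, hIconv⟩ := hA (fun n => x (f n)) ⟨Mb, fun n => hMb _⟩ a hconv
  exact ⟨⟨f, hfm⟩, fun k hk => by simp [hf, hk], ⟨hrows, a, hIconv⟩, hIconv⟩

/-- For bounded divergent `x`, an ideal `I`, and a (Fin,I)-regular matrix `A`,
the set Σ_{x,A}(I) is dense in Σ and the map `T` sending σ to the I-limit of Aσ(x)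
is discontinuous at every point of Σ_{x,A}(I). -/
theorem stmt_9 (x : ℕ → ℝ) (hxb : Bdd x) (hx : ¬ ∃ l : ℝ, Tendsto x atTop (𝓝 l))
    (I : Set (Set ℕ)) (hI : IsIdeal I) (A : ℕ → ℕ → ℝ) (hA : FinIRegular I A)
    (T : MonoSeq → ℝ)
    (hT : ∀ σ ∈ SigmaSet x A I, IConvTo I (matMul A (fun k => x (σ.1 k))) (T σ)) :
    Dense (SigmaSet x A I) ∧
      ∀ σ ∈ SigmaSet x A I, ¬ ContinuousWithinAt T (SigmaSet x A I) σ := by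
  obtain ⟨a, b, hab, ⟨τa, hτa, hτal⟩, ⟨τb, hτb, hτbl⟩⟩ := two_sublimits x hxb hx
  have approx : ∀ (c : ℝ) (τ : ℕ → ℕ), StrictMono τ →
      Tendsto (fun n => x (τ n)) atTop (𝓝 c) → ∀ σ : MonoSeq,
      ∃ u : ℕ → MonoSeq, (∀ N, u N ∈ SigmaSet x A I) ∧
        (∀ N, IConvTo I (matMul A (fun k => x ((u N).1 k))) c) ∧
        Tendsto u atTop (𝓝 σ) := by
    intro c τ hτ hl σ
    choose u hu1 hu2 hu3 using fun N => exists_extension x hxb I A hA hτ hl σ N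
    refine ⟨u, hu2, hu3, ?_⟩
    rw [tendsto_subtype_rng, tendsto_pi_nhds]
    intro k
    have hev : ∀ᶠ N in atTop, (u N).1 k = σ.1 k := by
      filter_upwards [Filter.eventually_ge_atTop (k + 1)] with N hN
      exact hu1 N k (by omega)
    exact Tendsto.congr' (hev.mono fun N h => h.symm) tendsto_const_nhds
  constructor
  · intro σ
    rw [mem_closure_iff_seq_limit]
    obtain ⟨u, hu1, -, hu3⟩ := approx a τa hτa hτal σ
    exact ⟨u, hu1, hu3⟩
  · intro σ hσ hcont
    have main : ∀ (c : ℝ) (τ : ℕ → ℕ), StrictMono τ →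
        Tendsto (fun n => x (τ n)) atTop (𝓝 c) → c = T σ := by
      intro c τ hτ hl
      obtain ⟨u, hu1, hu2, hu3⟩ := approx c τ hτ hl σ
      have hTu : ∀ N, T (u N) = c := fun N =>
        iconv_unique hI (hT (u N) (hu1 N)) (hu2 N)
      have hlim : Tendsto u atTop (𝓝[SigmaSet x A I] σ) := by
        rw [tendsto_nhdsWithin_iff]
        exact ⟨hu3, Filter.Eventually.of_forall hu1⟩
      have h2 : Tendsto (fun N => T (u N)) atTop (𝓝 (T σ)) := hcont.tendsto.comp hlim
      exact tendsto_nhds_unique (tendsto_const_nhds.congr fun N => (hTu N).symm) h2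
    exact hab ((main a τa hτa hτal).trans (main b τb hτb hτbl).symm)
end

section
/- Fix an unbounded real sequence x and a real sequence a that is not eventually zero. Then the set {σ ∈ Σ : the sequence of partial sums (∑_{k ≤ n} a_k x_{σ(k)})_n is bounded} is meager in Σ. -/
open Filter Topology

lemma escape (x : ℕ → ℝ) (hx : ¬ Bdd x) (L : ℕ) (R : ℝ) : ∃ n, L < n ∧ R < |x n| := by
  by_contra h
  push_neg at h
  apply hx
  set C := ((Finset.range (L+1)).image (fun n => |x n|)).max' (by simp) with hC
  refine ⟨max R C, fun n => ?_⟩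
  rcases le_or_gt n L with hn | hn
  · have : |x n| ∈ (Finset.range (L+1)).image (fun n => |x n|) :=
      Finset.mem_image_of_mem (fun n => |x n|) (Finset.mem_range.mpr (Nat.lt_succ_of_le hn))
    exact le_trans (Finset.le_max' _ _ this) (le_max_right _ _)
  · exact le_trans (h n hn) (le_max_left _ _)

lemma exists_mod (x : ℕ → ℝ) (hx : ¬ Bdd x) (a : ℕ → ℝ)
    (ha : ¬ ∃ k₀ : ℕ, ∀ k ≥ k₀, a k = 0) (M : ℝ) (σ : MonoSeq) (N : ℕ) :
    ∃ τ : MonoSeq, (∀ j ≤ N, τ.1 j = σ.1 j) ∧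
      ∃ n, M < |∑ k ∈ Finset.range (n + 1), a k * x (τ.1 k)| := by
  push_neg at ha
  obtain ⟨k, hkN, hak⟩ := ha (N + 1)
  set P : ℝ := ∑ j ∈ Finset.range k, a j * x (σ.1 j) with hP
  obtain ⟨b, hbL, hbR⟩ := escape x hx (σ.1 k) ((M + |P|) / |a k|)
  set τ : ℕ → ℕ := fun j => if j < k then σ.1 j else b + (j - k) with hτ
  have hmono : StrictMono τ := by
    intro i j hij
    simp only [hτ]
    rcases lt_or_ge i k with hi | hi
    · rcases lt_or_ge j k with hj | hj
      · simpa [hi, hj] using σ.2 hij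
      · simp only [if_pos hi, if_neg (not_lt.2 hj)]
        calc σ.1 i < σ.1 k := σ.2 hi
          _ < b := hbL
          _ ≤ b + (j - k) := Nat.le_add_right _ _
    · have hj : ¬ j < k := not_lt.2 (le_trans hi hij.le)
      simp only [if_neg (not_lt.2 hi), if_neg hj]
      exact Nat.add_lt_add_left (Nat.sub_lt_sub_right hi hij) b
  refine ⟨⟨τ, hmono⟩, fun j hj => ?_, k, ?_⟩
  · simp [hτ, Nat.lt_of_le_of_lt hj hkN]
  · have hsum : ∑ j ∈ Finset.range (k + 1), a j * x (τ j) = P + a k * x b := by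
      rw [Finset.sum_range_succ]
      congr 1
      · exact Finset.sum_congr rfl fun j hj => by
          simp [hτ, Finset.mem_range.mp hj]
      · simp [hτ]
    rw [hsum]
    have hak' : 0 < |a k| := abs_pos.mpr hak
    have h1 : M + |P| < |a k| * |x b| := by
      rw [div_lt_iff₀ hak'] at hbR; linarith
    have h2 : |a k * x b| ≤ |P + a k * x b| + |P| := by
      calc |a k * x b| = |(P + a k * x b) - P| := by ring_nf
        _ ≤ |P + a k * x b| + |P| := abs_sub _ _
    rw [abs_mul] at h2
    linarith

/-- For unbounded `x` and `a` not eventually zero, the set of σ ∈ Σ for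
which the partial sums (∑_{k ≤ n} a_k x_{σ(k)})_n are bounded is meager in Σ. -/
theorem stmt_11 (x : ℕ → ℝ) (hx : ¬ Bdd x) (a : ℕ → ℝ)
    (ha : ¬ ∃ k₀ : ℕ, ∀ k ≥ k₀, a k = 0) :
    IsMeagre {σ : MonoSeq |
      ∃ M : ℝ, ∀ n : ℕ, |∑ k ∈ Finset.range (n + 1), a k * x (σ.1 k)| ≤ M} := by
  set C : ℝ → Set MonoSeq := fun M =>
    {σ | ∀ n : ℕ, |∑ k ∈ Finset.range (n + 1), a k * x (σ.1 k)| ≤ M} with hC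
  have hsub : {σ : MonoSeq |
      ∃ M : ℝ, ∀ n : ℕ, |∑ k ∈ Finset.range (n + 1), a k * x (σ.1 k)| ≤ M}
      ⊆ ⋃ m : ℕ, C m := by
    rintro σ ⟨M, hM⟩
    obtain ⟨m, hm⟩ := exists_nat_ge M
    exact Set.mem_iUnion.2 ⟨m, fun n => (hM n).trans hm⟩
  refine IsMeagre.mono hsub (isMeagre_iUnion fun m => ?_)
  -- C m is closed
  have hclosed : IsClosed (C m) := by
    have : C (m : ℝ) = ⋂ n : ℕ, (fun σ : MonoSeq =>
        |∑ k ∈ Finset.range (n + 1), a k * x (σ.1 k)|) ⁻¹' Set.Iic (m : ℝ) := by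
      ext σ; simp [hC, Set.mem_iInter]
    rw [this]
    refine isClosed_iInter fun n => IsClosed.preimage ?_ isClosed_Iic
    refine Continuous.abs (continuous_finset_sum _ fun k _ => ?_)
    exact continuous_const.mul (continuous_of_discreteTopology.comp ((continuous_apply k).comp continuous_subtype_val))
  -- interior empty
  have hint : interior (C m) = ∅ := by
    by_contra h
    obtain ⟨σ, hσ⟩ := Set.nonempty_iff_ne_empty.2 h
    have hτ := fun N => exists_mod x hx a ha m σ N
    choose τ hagree hbad using hτ
    have htend : Tendsto τ atTop (𝓝 σ) := by
      rw [tendsto_subtype_rng, tendsto_pi_nhds]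
      intro k
      refine Tendsto.congr' ?_ (tendsto_const_nhds (α := ℕ))
      filter_upwards [eventually_ge_atTop k] with N hN
      exact (hagree N k hN).symm
    have hev := htend.eventually_mem (isOpen_interior.mem_nhds hσ)
    obtain ⟨N, hN⟩ := hev.exists
    obtain ⟨n, hn⟩ := hbad N
    exact absurd (interior_subset hN n) (not_le.2 hn)
  -- meager
  rw [isMeagre_iff_countable_union_isNowhereDense]
  exact ⟨{C m}, by simpa using hclosed.isNowhereDense_iff.2 hint,
    Set.countable_singleton _, by simp⟩
end

section
/- Let A = (a_{n,k}) be an infinite real matrix that is not row finite (i.e. some row of A is not eventually zero), and fix an unbounded real sequence x. Then the set {σ ∈ Σ : for every n, the series ∑_k a_{n,k} x_{σ(k)} converges} is meager in Σ. -/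
open Filter Topology

/-- Terms of a convergent series are bounded by a natural number. -/
lemma bdd_of_seriesConv (f : ℕ → ℝ) (h : SeriesConv f) : ∃ M : ℕ, ∀ k, |f k| ≤ M := by
  obtain ⟨l, hl⟩ := h
  have h0 : Tendsto f atTop (𝓝 0) := by
    have h1 : Tendsto (fun N => ∑ k ∈ Finset.range (N + 1), f k) atTop (𝓝 l) :=
      hl.comp (tendsto_add_atTop_nat 1)
    have := h1.sub hl
    simp only [sub_self] at this
    convert this using 2 with N
    rw [Finset.sum_range_succ]
    ring
  have hev : ∀ᶠ k in atTop, |f k| ≤ 1 := by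
    have := h0.eventually (Metric.ball_mem_nhds (0 : ℝ) one_pos)
    filter_upwards [this] with k hk
    simpa [Real.dist_eq] using hk.le
  obtain ⟨K, hK⟩ := hev.exists_forall_of_atTop
  set B : ℝ := (Finset.range (K + 1)).sup' ⟨0, by simp⟩ (fun k => |f k|) with hB
  refine ⟨⌈max B 1⌉₊, fun k => ?_⟩
  have hceil : max B 1 ≤ (⌈max B 1⌉₊ : ℝ) := Nat.le_ceil _
  rcases le_or_gt k K with hk | hk
  · have : |f k| ≤ B := Finset.le_sup' (fun k => |f k|) (Finset.mem_range.mpr (Nat.lt_succ_of_le hk))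
    exact this.trans ((le_max_left _ _).trans hceil)
  · exact (hK k hk.le).trans ((le_max_right _ _).trans hceil)

lemma closed_empty_interior_isMeagre {X : Type*} [TopologicalSpace X] {s : Set X}
    (hc : IsClosed s) (hi : interior s = ∅) : IsMeagre s := by
  rw [isMeagre_iff_countable_union_isNowhereDense]
  exact ⟨{s}, by simpa [hc.isNowhereDense_iff], Set.countable_singleton _, by simp⟩

/-- If `A` is not row finite and `x` is unbounded, then
`{σ ∈ Σ : every series ∑_k a_{n,k} x_{σ(k)} converges}` is meager in Σ. -/
theorem stmt_12 (A : ℕ → ℕ → ℝ) (hA : ¬ ∀ n : ℕ, ∃ k₀ : ℕ, ∀ k ≥ k₀, A n k = 0)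
    (x : ℕ → ℝ) (hx : ¬ Bdd x) :
    IsMeagre {σ : MonoSeq | RowsConv A (fun k => x (σ.1 k))} := by
  push_neg at hA
  obtain ⟨n₀, hn₀⟩ := hA
  have hx' : ∀ M : ℝ, ∃ n, ¬ |x n| ≤ M := by
    intro M
    by_contra h
    push_neg at h
    exact hx ⟨M, h⟩
  -- the candidate closed nowhere dense sets
  set C : ℕ → Set MonoSeq := fun M => {σ | ∀ k, |A n₀ k * x (σ.1 k)| ≤ (M : ℝ)} with hC
  have hsub : {σ : MonoSeq | RowsConv A (fun k => x (σ.1 k))} ⊆ ⋃ M, C M := by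
    intro σ hσ
    obtain ⟨M, hM⟩ := bdd_of_seriesConv _ (hσ n₀)
    exact Set.mem_iUnion.mpr ⟨M, hM⟩
  refine IsMeagre.mono hsub (isMeagre_iUnion fun M => ?_)
  have hclosed : IsClosed (C M) := by
    have : C M = ⋂ k, (fun σ : MonoSeq => σ.1 k) ⁻¹' {m | |A n₀ k * x m| ≤ (M : ℝ)} := by
      ext σ; simp [hC, Set.mem_iInter]
    rw [this]
    exact isClosed_iInter fun k =>
      (isClosed_discrete _).preimage ((continuous_apply k).comp continuous_subtype_val)
  refine closed_empty_interior_isMeagre hclosed ?_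
  rw [Set.eq_empty_iff_forall_notMem]
  intro σ hσ
  have hmem : C M ∈ 𝓝 σ := mem_interior_iff_mem_nhds.mp hσ
  rw [nhds_subtype_eq_comap, Filter.mem_comap] at hmem
  obtain ⟨U, hU, hUC⟩ := hmem
  rw [nhds_pi, Filter.mem_pi] at hU
  obtain ⟨I, hIfin, t, ht, htU⟩ := hU
  obtain ⟨N, hN⟩ := hIfin.bddAbove
  -- pick a column k beyond N with nonzero entry
  obtain ⟨k, hkN, hAk⟩ := hn₀ (N + 1)
  have hAkpos : (0 : ℝ) < |A n₀ k| := abs_pos.mpr hAk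
  -- pick j > σ.1 k with |x j| huge
  set B : ℝ := (Finset.range (σ.1 k + 1)).sup' ⟨0, by simp⟩ (fun n => |x n|) with hB
  obtain ⟨j, hj⟩ := hx' (max B (((M : ℝ) + 1) / |A n₀ k|))
  have hjx : max B (((M : ℝ) + 1) / |A n₀ k|) < |x j| := lt_of_not_ge hj
  have hjgt : σ.1 k < j := by
    by_contra hle
    push_neg at hle
    have : |x j| ≤ B := Finset.le_sup' (fun n => |x n|) (Finset.mem_range.mpr (Nat.lt_succ_of_le hle))
    exact absurd ((le_max_left _ _).trans_lt hjx) (not_lt.mpr this)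
  -- build the perturbed sequence τ
  set τ : ℕ → ℕ := fun i => if i < k then σ.1 i else j + (i - k) with hτ
  have hτmono : StrictMono τ := by
    apply strictMono_nat_of_lt_succ
    intro i
    simp only [hτ]
    rcases lt_or_ge (i + 1) k with h1 | h1
    · rw [if_pos (by omega), if_pos h1]
      exact σ.2 (Nat.lt_succ_self i)
    rcases lt_or_ge i k with h2 | h2
    · rw [if_pos h2, if_neg (by omega)]
      calc σ.1 i ≤ σ.1 k := σ.2.monotone h2.le
        _ < j := hjgt
        _ ≤ j + (i + 1 - k) := Nat.le_add_right _ _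
    · rw [if_neg (by omega), if_neg (by omega)]
      omega
  have hτk : τ k = j := by simp [hτ]
  have hτI : (⟨τ, hτmono⟩ : MonoSeq) ∈ C M := by
    apply hUC
    apply htU
    intro i hi
    have hik : i < k := by
      have := hN hi
      omega
    have : τ i = σ.1 i := by simp [hτ, hik]
    simpa [this] using mem_of_mem_nhds (ht i)
  have := hτI k
  simp only [hτk] at this
  have hcontra : (M : ℝ) + 1 < |A n₀ k * x j| := by
    rw [abs_mul]
    have h1 : ((M : ℝ) + 1) / |A n₀ k| < |x j| := (le_max_right _ _).trans_lt hjx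
    calc (M : ℝ) + 1 = ((M : ℝ) + 1) / |A n₀ k| * |A n₀ k| := by
          field_simp
      _ < |x j| * |A n₀ k| := by
          exact mul_lt_mul_of_pos_right h1 hAkpos
      _ = |A n₀ k| * |x j| := mul_comm _ _
  linarith
end
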